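/- arXiv:2107.01029 — 11 statements merged into one kernel-verified Lean document; each statement's English description precedes it below -/
import Mathlib

section
/- a_HH(1) = 0, a_HH(2) = 1, and for all n ≥ 1, a_HH(n+2) = a_HH(n+1) + a_HH(n); that is, (a_HH(n)) is the Fibonacci sequence. -/
/-- All lists of booleans of length `k`. -/
def allBool : ℕ → Finset (List Bool)
  | 0 => {[]}
  | k+1 => ((allBool k).image (true :: ·)) ∪ ((allBool k).image (false :: ·))

lemma mem_allBool (k : ℕ) (l : List Bool) : l ∈ allBool k ↔ l.length = k := by
  induction k generalizing l with
  | zero => simp [allBool, List.length_eq_zero_iff]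
  | succ k ih =>
    cases l with
    | nil => simp [allBool]
    | cons b t =>
      cases b <;> simp [allBool, ih]

/-- `m` of length `k` such that `HH` is not an infix of `m ++ [true]`. -/
def goodSet (k : ℕ) : Finset (List Bool) :=
  (allBool k).filter (fun m => ¬ ([true,true] <:+: (m ++ [true])))

lemma natcard_of_finset {α : Type*} {p : α → Prop} (s : Finset α)
    (h : ∀ x, x ∈ s ↔ p x) : Nat.card {x // p x} = s.card := by
  haveI := Fintype.subtype s h
  rw [Nat.card_eq_fintype_card]
  exact Fintype.card_of_subtype s h

lemma not_HH_prefix_false (s : List Bool) : ¬ ([true,true] <+: (false :: s)) := by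
  simp [List.cons_prefix_cons]

lemma infix_cons_false (s : List Bool) :
    [true,true] <:+: (false :: s) ↔ [true,true] <:+: s := by
  rw [List.infix_cons_iff]
  simp [List.cons_prefix_cons]

lemma infix_cons_true_false (s : List Bool) :
    [true,true] <:+: (true :: false :: s) ↔ [true,true] <:+: s := by
  rw [List.infix_cons_iff, infix_cons_false]
  simp [List.cons_prefix_cons]

lemma goodSet_succ_succ (k : ℕ) :
    goodSet (k+2)
      = ((goodSet (k+1)).image (false :: ·))
        ∪ ((goodSet k).image (fun m => true :: false :: m)) := by
  ext m
  simp only [goodSet, Finset.mem_filter, mem_allBool, Finset.mem_union, Finset.mem_image]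
  constructor
  · rintro ⟨hlen, hinf⟩
    match m, hlen with
    | false :: t, hlen =>
      left
      exact ⟨t, ⟨by simpa using hlen, by rwa [List.cons_append, infix_cons_false] at hinf⟩, rfl⟩
    | true :: true :: t, hlen =>
      exact absurd (List.IsPrefix.isInfix (by simp [List.cons_prefix_cons])) hinf
    | true :: false :: t, hlen =>
      right
      refine ⟨t, ⟨by simpa using hlen, ?_⟩, rfl⟩
      rwa [List.cons_append, List.cons_append, infix_cons_true_false] at hinf
  · rintro (⟨t, ⟨hlen, hinf⟩, rfl⟩ | ⟨t, ⟨hlen, hinf⟩, rfl⟩)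
    · exact ⟨by simp [hlen], by rwa [List.cons_append, infix_cons_false]⟩
    · exact ⟨by simp [hlen], by
        rwa [List.cons_append, List.cons_append, infix_cons_true_false]⟩

lemma goodSet_card (k : ℕ) : (goodSet k).card = Nat.fib (k+1) := by
  induction k using Nat.strong_induction_on with
  | _ k ih =>
    match k with
    | 0 => decide
    | 1 => decide
    | (k+2) =>
      rw [goodSet_succ_succ]
      rw [Finset.card_union_of_disjoint, Finset.card_image_of_injective _ (by
            intro a b h; simpa using h),
          Finset.card_image_of_injective _ (by intro a b h; simpa using h),
          ih (k+1) (by omega), ih k (by omega)]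
      · rw [Nat.add_comm]
        exact (Nat.fib_add_two).symm
      · rw [Finset.disjoint_left]
        intro x hx hy
        simp only [Finset.mem_image] at hx hy
        obtain ⟨a, _, rfl⟩ := hx
        obtain ⟨b, _, h⟩ := hy
        simp at h



/-- The number of binary sequences (lists of Booleans, `true` = H, `false` = T) of
length `n` in which the word `W` appears for the first time exactly at the end:
`W` is a suffix of `l` and `W` does not occur as a contiguous sublist of `l` with
its last entry removed. -/
noncomputable def firstCount (W : List Bool) (n : ℕ) : ℕ :=
  Nat.card {l : List Bool // l.length = n ∧ W <:+ l ∧ ¬ (W <:+: l.dropLast)}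


lemma dropLast_app (t : List Bool) :
    (t ++ [true, true]).dropLast = t ++ [true] := by
  have : t ++ [true, true] = (t ++ [true]) ++ [true] := by simp
  rw [this, List.dropLast_concat]

lemma firstCount_eq (n : ℕ) :
    firstCount [true, true] (n + 2) = (goodSet n).card := by
  rw [firstCount,
    natcard_of_finset ((goodSet n).image (· ++ [true, true])) (fun l => ?_),
    Finset.card_image_of_injective _ (fun a b h => by simpa using h)]
  simp only [Finset.mem_image, goodSet, Finset.mem_filter, mem_allBool]
  constructor
  · rintro ⟨m, ⟨hlen, hinf⟩, rfl⟩
    refine ⟨by simp [hlen], ⟨m, rfl⟩, ?_⟩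
    rwa [dropLast_app]
  · rintro ⟨hlen, ⟨t, rfl⟩, hinf⟩
    rw [dropLast_app] at hinf
    exact ⟨t, ⟨by simp at hlen; omega, hinf⟩, rfl⟩

lemma firstCount_fib (n : ℕ) (hn : 1 ≤ n) :
    firstCount [true, true] n = Nat.fib (n - 1) := by
  match n, hn with
  | 1, _ =>
    rw [firstCount, natcard_of_finset (∅ : Finset (List Bool)) (fun l => ?_)]
    · simp
    · simp only [Finset.notMem_empty, false_iff]
      rintro ⟨hlen, hsuf, -⟩
      have := hsuf.length_le
      simp [hlen] at this
  | (k+2), _ =>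
    rw [firstCount_eq, goodSet_card]
    rfl


theorem stmt_1 :
    firstCount [true, true] 1 = 0 ∧ firstCount [true, true] 2 = 1 ∧
    (∀ n : ℕ, 1 ≤ n →
      firstCount [true, true] (n + 2)
        = firstCount [true, true] (n + 1) + firstCount [true, true] n) ∧
    (∀ n : ℕ, 1 ≤ n → firstCount [true, true] n = Nat.fib (n - 1)) := by
  refine ⟨firstCount_fib 1 le_rfl, firstCount_fib 2 (by omega), fun n hn => ?_, firstCount_fib⟩
  rw [firstCount_fib n hn, firstCount_fib (n+1) (by omega), firstCount_fib (n+2) (by omega)]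
  obtain ⟨m, rfl⟩ : ∃ m, n = m + 1 := ⟨n - 1, by omega⟩
  show Nat.fib (m + 2) = Nat.fib (m + 1) + Nat.fib m
  rw [Nat.fib_add_two, Nat.add_comm]
end

section
/- For all n ≥ 1, a_HT(n) = n − 1. -/
lemma no_ht_replicate (a b : ℕ) :
    ¬ ([true, false] <:+: (List.replicate a false ++ List.replicate b true)) := by
  induction a with
  | zero =>
    intro h
    have hf : false ∈ List.replicate b true := by
      have := h.sublist.subset (by simp : false ∈ [true, false])
      simp only [List.mem_append, List.mem_replicate] at this
      tauto
    simpa using List.eq_of_mem_replicate hf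
  | succ a ih =>
    intro h
    rw [List.replicate_succ, List.cons_append, List.infix_cons_iff] at h
    rcases h with h | h
    · rcases h with ⟨t, ht⟩
      simp at ht
    · exact ih h

lemma avoid_ht (l : List Bool) (hl : ¬ ([true, false] <:+: l)) :
    ∃ a b, l = List.replicate a false ++ List.replicate b true := by
  induction l with
  | nil => exact ⟨0, 0, rfl⟩
  | cons x xs ih =>
    have hxs : ¬ ([true, false] <:+: xs) := fun h =>
      hl (List.infix_cons_iff.mpr (Or.inr h))
    obtain ⟨a, b, hab⟩ := ih hxs
    cases x with
    | false =>
      exact ⟨a + 1, b, by simp [hab, List.replicate_succ]⟩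
    | true =>
      rcases a with _ | a
      · exact ⟨0, b + 1, by simp [hab, List.replicate_succ]⟩
      · exfalso
        apply hl
        refine ⟨[], List.replicate a false ++ List.replicate b true, ?_⟩
        simp [hab, List.replicate_succ]

theorem stmt_2 : ∀ n : ℕ, 1 ≤ n → firstCount [true, false] n = n - 1 := by
  intro n hn
  have key : Function.Bijective (fun k : Fin (n - 1) =>
      (⟨List.replicate (n - 1 - (k.1 + 1)) false ++
          (List.replicate (k.1 + 1) true ++ [false]), by
        have hk := k.2
        refine ⟨by simp; omega, ?_, ?_⟩
        · refine ⟨List.replicate (n - 1 - (k.1 + 1)) false ++ List.replicate k.1 true, ?_⟩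
          simp [List.replicate_succ' (n := k.1), List.append_assoc]
        · have hdl : (List.replicate (n - 1 - (k.1 + 1)) false ++
              (List.replicate (k.1 + 1) true ++ [false])).dropLast
              = List.replicate (n - 1 - (k.1 + 1)) false ++ List.replicate (k.1 + 1) true := by
            rw [← List.append_assoc, List.dropLast_concat]
          rw [hdl]
          exact no_ht_replicate _ _⟩ :
      {l : List Bool // l.length = n ∧ [true, false] <:+ l ∧
        ¬ ([true, false] <:+: l.dropLast)})) := by
    constructor
    · intro k k' h
      have h' := congrArg (fun s => List.count true s.1) h
      simp [List.count_append, List.count_replicate] at h'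
      exact Fin.ext h'
    · rintro ⟨l, hlen, ⟨m, hm⟩, hni⟩
      have hdl : l.dropLast = m ++ [true] := by
        rw [← hm, show m ++ [true, false] = (m ++ [true]) ++ [false] by simp,
          List.dropLast_concat]
      rw [hdl] at hni
      obtain ⟨a, b, hab⟩ := avoid_ht _ hni
      have hb : 1 ≤ b := by
        rcases Nat.eq_zero_or_pos b with hb0 | hb0
        · exfalso
          have : true ∈ List.replicate a false := by
            rw [hb0, List.replicate_zero, List.append_nil] at hab
            rw [← hab]; simp
          simpa using List.eq_of_mem_replicate this
        · exact hb0
      have hlab : m.length + 1 = a + b := by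
        have := congrArg List.length hab; simpa using this
      have hmn : m.length + 2 = n := by
        have := congrArg List.length hm; rw [hlen] at this; simpa using this
      refine ⟨⟨b - 1, by omega⟩, ?_⟩
      apply Subtype.ext
      show List.replicate (n - 1 - (b - 1 + 1)) false ++
        (List.replicate (b - 1 + 1) true ++ [false]) = l
      have h1 : n - 1 - (b - 1 + 1) = a := by omega
      have h2 : b - 1 + 1 = b := by omega
      rw [h1, h2, ← hm, show m ++ [true, false] = (m ++ [true]) ++ [false] by simp,
        hab, List.append_assoc]
  unfold firstCount
  rw [← Nat.card_congr (Equiv.ofBijective _ key), Nat.card_eq_fintype_card, Fintype.card_fin]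
end

section
/- For every N ≥ 1, the probability that HT first appears at the N-th toss or later equals N/2^{N−1}; that is, 1 − ∑_{n=1}^{N−1} a_HT(n) · (1/2)^n = N / 2^{N−1}. -/
lemma avoid_iff (l : List Bool) :
    ¬ ([true, false] <:+: l) ↔ ∃ a b, l = List.replicate a false ++ List.replicate b true := by
  constructor
  · intro h
    induction l with
    | nil => exact ⟨0, 0, rfl⟩
    | cons x xs ih =>
      have hxs : ¬ ([true, false] <:+: xs) := fun h' => h (List.infix_cons h')
      obtain ⟨a, b, hab⟩ := ih hxs
      cases x with
      | false =>
        exact ⟨a + 1, b, by rw [List.replicate_succ, List.cons_append, hab]⟩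
      | true =>
        refine ⟨0, b + 1, ?_⟩
        have ha : a = 0 := by
          by_contra ha
          obtain ⟨a', rfl⟩ := Nat.exists_eq_succ_of_ne_zero ha
          apply h
          refine (List.prefix_iff_eq_take.mpr ?_).isInfix
          rw [hab]
          simp [List.replicate_succ]
        subst ha
        simp at hab
        rw [hab]
        simp [List.replicate_succ]
  · rintro ⟨a, b, rfl⟩ h
    induction a with
    | zero =>
      simp only [List.replicate_zero, List.nil_append] at h
      have : false ∈ List.replicate b true := h.subset (by simp)
      simpa using List.eq_of_mem_replicate this
    | succ a iha =>
      rw [List.replicate_succ, List.cons_append, List.infix_cons_iff] at h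
      rcases h with h | h
      · obtain ⟨t, ht⟩ := h
        simp at ht
      · exact iha h

lemma firstCount_HT (n : ℕ) : firstCount [true, false] n = n - 1 := by
  match n with
  | 0 =>
    have : IsEmpty {l : List Bool // l.length = 0 ∧ [true, false] <:+ l ∧
        ¬ ([true, false] <:+: l.dropLast)} := by
      constructor
      rintro ⟨l, hlen, hsuf, -⟩
      have h2 := hsuf.length_le
      rw [hlen] at h2
      simp at h2
    exact Nat.card_of_isEmpty
  | 1 =>
    have : IsEmpty {l : List Bool // l.length = 1 ∧ [true, false] <:+ l ∧
        ¬ ([true, false] <:+: l.dropLast)} := by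
      constructor
      rintro ⟨l, hlen, hsuf, -⟩
      have h2 := hsuf.length_le
      rw [hlen] at h2
      simp at h2
    simp [firstCount, Nat.card_of_isEmpty]
  | (m + 2) =>
    have key : Nat.card (Fin (m + 1)) = firstCount [true, false] (m + 2) := by
      apply Nat.card_eq_of_bijective
        (f := fun a : Fin (m + 1) =>
          (⟨(List.replicate a false ++ List.replicate (m - a) true) ++ [true, false], ?_, ?_, ?_⟩ :
            {l : List Bool // l.length = m + 2 ∧ [true, false] <:+ l ∧
              ¬ ([true, false] <:+: l.dropLast)}))
      · constructor
        · intro a a' haa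
          have hc := congrArg (fun l : {l : List Bool // _} => l.val.count false) haa
          simp only [List.count_append, List.count_replicate] at hc
          simp at hc
          exact Fin.ext hc
        · rintro ⟨l, hlen, hsuf, hnin⟩
          obtain ⟨s, rfl⟩ := hsuf
          have hdl : (s ++ [true, false]).dropLast = s ++ [true] := by
            have : s ++ [true, false] = (s ++ [true]) ++ [false] := by simp
            rw [this, List.dropLast_concat]
          rw [hdl] at hnin
          obtain ⟨a, b, hab⟩ := (avoid_iff _).mp hnin
          have hb : b ≠ 0 := by
            rintro rfl
            simp only [List.replicate_zero, List.append_nil] at hab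
            have ht : true ∈ List.replicate a false := by rw [← hab]; simp
            simpa using List.eq_of_mem_replicate ht
          obtain ⟨b', rfl⟩ := Nat.exists_eq_succ_of_ne_zero hb
          rw [List.replicate_succ' (n := b') (a := true), ← List.append_assoc] at hab
          have hs : s = List.replicate a false ++ List.replicate b' true :=
            List.append_cancel_right hab
          have hlen' : a + b' + 2 = m + 2 := by
            have h1 : s.length = a + b' := by rw [hs]; simp
            have h2 : s.length + 2 = m + 2 := by simpa using hlen
            omega
          have ham : a ≤ m := by omega
          have hma : m - a = b' := by omega
          refine ⟨⟨a, by omega⟩, Subtype.ext ?_⟩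
          show (List.replicate a false ++ List.replicate (m - a) true) ++ [true, false]
            = s ++ [true, false]
          rw [hma, hs]
      · simp [List.length_append]
        omega
      · exact List.suffix_append _ _
      · have : (List.replicate (a : ℕ) false ++ List.replicate (m - a) true) ++ [true, false]
            = ((List.replicate (a : ℕ) false ++ List.replicate (m - a) true) ++ [true]) ++ [false] := by
          simp
        rw [this, List.dropLast_concat]
        apply (avoid_iff _).mpr
        exact ⟨a, m - a + 1, by rw [List.replicate_succ' (n := m - a) (a := true)]; simp⟩
    simpa using key.symm

theorem stmt_4 :
    ∀ N : ℕ, 1 ≤ N →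
      1 - ∑ n ∈ Finset.Icc 1 (N - 1), (firstCount [true, false] n : ℝ) * (1 / 2) ^ n
        = (N : ℝ) / 2 ^ (N - 1) := by
  intro N hN
  induction N, hN using Nat.le_induction with
  | base => simp
  | succ N hN ih =>
    have hstep : Finset.Icc 1 (N + 1 - 1) = Finset.Icc 1 ((N - 1) + 1) := by
      congr 1
      omega
    rw [hstep, Finset.sum_Icc_succ_top (by omega)]
    have hN1 : (N - 1) + 1 = N := by omega
    rw [hN1, firstCount_HT]
    have hcast : ((N - 1 : ℕ) : ℝ) = (N : ℝ) - 1 := by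
      rw [Nat.cast_sub hN]; simp
    rw [hcast]
    have h2 : (2 : ℝ) ^ N = 2 * 2 ^ (N - 1) := by
      rw [← pow_succ']
      congr 1
      omega
    have hpos : (2 : ℝ) ^ (N - 1) ≠ 0 := by positivity
    rw [← sub_sub, ih]
    simp only [Nat.add_sub_cancel]
    push_cast
    rw [div_pow, one_pow, h2]
    field_simp
    ring
end

section
/- For all n ≥ 1, a_HH(n) equals the nearest integer to (1/√5)·((1+√5)/2)^{n−1}; i.e., a_HH(n) = Round[(1/√5)·φ^{n−1}] where φ = (1+√5)/2. -/
open Set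

/-- infix of a concat -/
lemma infix_concat_iff (w l : List Bool) (a : Bool) :
    w <:+: l ++ [a] ↔ w <:+: l ∨ w <:+ l ++ [a] := by
  constructor
  · rintro ⟨s, t, h⟩
    rcases List.eq_nil_or_concat t with rfl | ⟨t', b, rfl⟩
    · right; exact ⟨s, by simpa using h⟩
    · left
      have h' : (s ++ w ++ t') ++ [b] = l ++ [a] := by simpa using h
      have hl : s ++ w ++ t' = l := by
        have := List.append_inj' h' rfl
        exact this.1
      exact ⟨s, t', hl⟩
  · rintro (h | h)
    · exact h.trans (List.prefix_append l [a]).isInfix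
    · exact h.isInfix

lemma not_suffix_HH_false (l : List Bool) : ¬ ([true, true] <:+ l ++ [false]) := by
  rintro ⟨s, h⟩
  have h' : (s ++ [true]) ++ [true] = l ++ [false] := by simpa using h
  have := (List.append_inj' h' rfl).2
  simp at this

lemma infix_HH_false (l : List Bool) :
    ([true, true] <:+: l ++ [false]) ↔ [true, true] <:+: l := by
  rw [infix_concat_iff]
  simp [not_suffix_HH_false l]

lemma infix_HH_false_true (l : List Bool) :
    ([true, true] <:+: l ++ [false, true]) ↔ [true, true] <:+: l := by
  have : l ++ [false, true] = (l ++ [false]) ++ [true] := by simp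
  rw [this, infix_concat_iff, infix_HH_false]
  constructor
  · rintro (h | ⟨s, h⟩)
    · exact h
    · exfalso
      have h' : (s ++ [true]) ++ [true] = (l ++ [false]) ++ [true] := by simpa using h
      have h2 := (List.append_inj' h' rfl).1
      have := (List.append_inj' h2 rfl).2
      simp at this
  · exact Or.inl

/-- sets -/
def US (m : ℕ) : Set (List Bool) := {l | l.length = m ∧ ¬ ([true, true] <:+: l)}
def VS (m : ℕ) : Set (List Bool) := {l | l.length = m ∧ ¬ ([true, true] <:+: l ++ [true])}

lemma US_finite (m : ℕ) : (US m).Finite :=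
  (List.finite_length_eq Bool m).subset fun _ h => h.1
lemma VS_finite (m : ℕ) : (VS m).Finite :=
  (List.finite_length_eq Bool m).subset fun _ h => h.1

lemma VS_succ (m : ℕ) : VS (m + 1) = (· ++ [false]) '' US m := by
  ext l
  constructor
  · rintro ⟨hlen, hinf⟩
    rcases List.eq_nil_or_concat l with rfl | ⟨t, c, rfl⟩
    · simp at hlen
    · simp only [List.concat_eq_append] at hlen hinf ⊢
      cases c
      · refine ⟨t, ⟨by simpa using hlen, ?_⟩, rfl⟩
        intro h
        apply hinf
        have : t ++ [false] ++ [true] = t ++ [false, true] := by simp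
        rw [this]
        exact (infix_HH_false_true t).2 h
      · exfalso
        apply hinf
        exact ⟨t, by simp⟩
  · rintro ⟨t, ⟨hlen, hinf⟩, rfl⟩
    refine ⟨by simpa using hlen, fun h => hinf ((infix_HH_false_true t).1 (by simpa using h))⟩

lemma US_succ (m : ℕ) :
    US (m + 1) = (· ++ [false]) '' US m ∪ (· ++ [true]) '' VS m := by
  ext l
  constructor
  · rintro ⟨hlen, hinf⟩
    rcases List.eq_nil_or_concat l with rfl | ⟨t, c, rfl⟩
    · simp at hlen
    · simp only [List.concat_eq_append] at hlen hinf ⊢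
      cases c
      · exact Or.inl ⟨t, ⟨by simpa using hlen, fun h => hinf ((infix_HH_false t).2 h)⟩, rfl⟩
      · exact Or.inr ⟨t, ⟨by simpa using hlen, hinf⟩, rfl⟩
  · rintro (⟨t, ⟨hlen, hinf⟩, rfl⟩ | ⟨t, ⟨hlen, hinf⟩, rfl⟩)
    · exact ⟨by simpa using hlen, fun h => hinf ((infix_HH_false t).1 h)⟩
    · exact ⟨by simpa using hlen, hinf⟩

lemma inj_concat (s : List Bool) : Function.Injective (· ++ s : List Bool → List Bool) :=
  List.append_left_injective s

lemma US_card (m : ℕ) : (US (m+1)).ncard = (US m).ncard + (VS m).ncard := by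
  rw [US_succ, Set.ncard_union_eq ?disj (((US_finite m)).image _) ((VS_finite m).image _),
    Set.ncard_image_of_injective _ (inj_concat _), Set.ncard_image_of_injective _ (inj_concat _)]
  case disj =>
    rw [Set.disjoint_left]
    rintro l ⟨t, _, rfl⟩ ⟨t', _, h⟩
    have := (List.append_inj' h rfl).2
    simp at this

lemma VS_card (m : ℕ) : (VS (m+1)).ncard = (US m).ncard := by
  rw [VS_succ, Set.ncard_image_of_injective _ (inj_concat _)]

lemma US_zero : (US 0).ncard = 1 := by
  have : US 0 = {[]} := by
    ext l; simp [US, List.length_eq_zero_iff]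
    rintro rfl; decide
  rw [this]; simp

lemma VS_zero : (VS 0).ncard = 1 := by
  have : VS 0 = {[]} := by
    ext l; simp [VS, List.length_eq_zero_iff]
    rintro rfl; decide
  rw [this]; simp

lemma VS_fib (m : ℕ) : (VS m).ncard = Nat.fib (m + 1) := by
  induction m using Nat.strong_induction_on with
  | _ m ih =>
    match m with
    | 0 => simpa using VS_zero
    | 1 => rw [VS_card, US_zero]; rfl
    | (k+2) =>
      rw [VS_card, US_card, ← VS_card k, ih (k+1) (by omega), ih k (by omega)]
      have h1 := Nat.fib_add_two (n := k+1)
      have h3 : k + 2 + 1 = k + 1 + 2 := rfl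
      rw [h3]
      omega


lemma dropLast_HH (s : List Bool) : (s ++ [true, true]).dropLast = s ++ [true] := by
  have h : s ++ [true, true] = (s ++ [true]) ++ [true] := by simp
  rw [h, List.dropLast_concat]

lemma firstCount_two (m : ℕ) : firstCount [true, true] (m + 2) = Nat.fib (m + 1) := by
  have hset : {l : List Bool | l.length = m + 2 ∧ [true, true] <:+ l ∧
      ¬ ([true, true] <:+: l.dropLast)} = (· ++ [true, true]) '' VS m := by
    ext l
    constructor
    · rintro ⟨hlen, ⟨s, rfl⟩, hinf⟩
      rw [dropLast_HH] at hinf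
      exact ⟨s, ⟨by simpa using hlen, hinf⟩, rfl⟩
    · rintro ⟨s, ⟨hlen, hinf⟩, rfl⟩
      exact ⟨by simpa using hlen, ⟨s, rfl⟩, by rw [dropLast_HH]; exact hinf⟩
  have h1 : firstCount [true, true] (m + 2)
      = ({l : List Bool | l.length = m + 2 ∧ [true, true] <:+ l ∧
          ¬ ([true, true] <:+: l.dropLast)} : Set (List Bool)).ncard :=
    Nat.card_coe_set_eq _
  rw [h1, hset, Set.ncard_image_of_injective _ (inj_concat _), VS_fib]

lemma firstCount_one : firstCount [true, true] 1 = 0 := by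
  have : IsEmpty {l : List Bool // l.length = 1 ∧ [true, true] <:+ l ∧
      ¬ ([true, true] <:+: l.dropLast)} := by
    constructor
    rintro ⟨l, hlen, hsuf, -⟩
    have := hsuf.length_le
    simp [hlen] at this
  exact Nat.card_of_isEmpty

open goldenRatio in
lemma round_gold (k : ℕ) :
    round ((1 / Real.sqrt 5) * ((1 + Real.sqrt 5) / 2) ^ k) = (Nat.fib k : ℤ) := by
  have h5 : (2 : ℝ) < Real.sqrt 5 := by
    rw [show (2:ℝ) = Real.sqrt 4 by rw [show (4:ℝ) = 2^2 by norm_num, Real.sqrt_sq]; norm_num]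
    exact Real.sqrt_lt_sqrt (by norm_num) (by norm_num)
  set x := (1 / Real.sqrt 5) * ((1 + Real.sqrt 5) / 2) ^ k with hxdef
  have hfib := Real.coe_fib_eq k
  have hdiff : x - (Nat.fib k : ℝ) = ψ ^ k / Real.sqrt 5 := by
    rw [hfib]; unfold x; ring
  have habsψ : |ψ| < 1 := abs_lt.2 ⟨Real.neg_one_lt_goldenConj, by linarith [Real.goldenConj_neg]⟩
  have hpow : |ψ ^ k| ≤ 1 := by
    rw [abs_pow]; exact pow_le_one₀ (abs_nonneg _) habsψ.le
  have habs : |x - (Nat.fib k : ℝ)| < 1 / 2 := by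
    rw [hdiff, abs_div, abs_of_nonneg (Real.sqrt_nonneg 5)]
    calc |ψ ^ k| / Real.sqrt 5 ≤ 1 / Real.sqrt 5 := by
          apply div_le_div_of_nonneg_right hpow ?_ |>.trans_eq rfl
          · linarith
      _ < 1 / 2 := by
          apply one_div_lt_one_div_of_lt <;> linarith
  rw [round_eq, Int.floor_eq_iff]
  have h := abs_lt.1 habs
  push_cast
  constructor <;> [linarith [h.1]; linarith [h.2]]

theorem stmt_5 :
    ∀ n : ℕ, 1 ≤ n →
      (firstCount [true, true] n : ℤ)
        = round ((1 / Real.sqrt 5) * ((1 + Real.sqrt 5) / 2) ^ (n - 1)) := by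
  intro n hn
  match n, hn with
  | 1, _ => rw [firstCount_one, round_gold 0]; rfl
  | (m + 2), _ =>
    have h : m + 2 - 1 = m + 1 := rfl
    rw [h, firstCount_two, round_gold (m + 1)]
end

section
/- For every m ≥ 1, the probability that HH has not appeared within the first m tosses equals a_HH(m+3)·(1/2)^m; that is, 1 − ∑_{n=1}^{m} a_HH(n) · (1/2)^n = a_HH(m+3) / 2^m. -/
open List Finset

/-- Finset of all Bool lists of length n -/
def AL : ℕ → Finset (List Bool)
  | 0 => {[]}
  | n+1 => (AL n).image (true :: ·) ∪ (AL n).image (false :: ·)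

lemma mem_AL : ∀ (n : ℕ) (l : List Bool), l ∈ AL n ↔ l.length = n := by
  intro n
  induction n with
  | zero => intro l; simp [AL, List.length_eq_zero_iff]
  | succ n ih =>
    intro l
    cases l with
    | nil => simp [AL]
    | cons a t =>
      cases a <;> simp [AL, ih]

def P (l : List Bool) : Prop := [true,true] <:+ l ∧ ¬ [true,true] <:+: l.dropLast

instance : DecidablePred P := fun l => by unfold P; infer_instance

def Fil (n : ℕ) : Finset (List Bool) := (AL n).filter P

lemma fc_eq (n : ℕ) : firstCount [true,true] n = (Fil n).card := by
  rw [Fil, ← Nat.card_eq_finsetCard]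
  apply Nat.card_congr
  apply Equiv.subtypeEquivRight
  intro l
  simp [mem_AL, P, and_assoc, Finset.mem_filter]

lemma hh_infix_fcons (t : List Bool) : [true,true] <:+: (false :: t) ↔ [true,true] <:+: t := by
  rw [List.infix_cons_iff]
  constructor
  · rintro (h | h)
    · rcases h with ⟨s, hs⟩; simp at hs
    · exact h
  · exact Or.inr

lemma hh_infix_tcons (t : List Bool) : [true,true] <:+: (true :: false :: t) ↔ [true,true] <:+: t := by
  rw [List.infix_cons_iff, hh_infix_fcons]
  constructor
  · rintro (h | h)
    · rcases h with ⟨s, hs⟩; simp at hs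
    · exact h
  · exact Or.inr

lemma hh_suffix_elim {a : Bool} {t : List Bool} (h : [true,true] <:+ a :: t)
    (hlen : 2 ≤ t.length) : [true,true] <:+ t := by
  rcases List.suffix_cons_iff.1 h with h | h
  · have := congrArg List.length h; simp at this; omega
  · exact h

lemma fil_succ (n : ℕ) :
    Fil (n+4) = (Fil (n+3)).image (false :: ·) ∪ (Fil (n+2)).image (fun l => true :: false :: l) := by
  ext l
  simp only [Fil, Finset.mem_union, Finset.mem_image, Finset.mem_filter, mem_AL]
  constructor
  · rintro ⟨hlen, hsuf, hninf⟩
    match l, hlen with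
    | a :: b :: t, hlen =>
      have ht : t.length = n + 2 := by simpa using hlen
      have hbt : (b :: t).length = n + 3 := by simp [ht]
      have hne : t ≠ [] := by intro h; simp [h] at ht
      cases a
      · -- first letter false
        left
        refine ⟨b :: t, ⟨hbt, ?_, ?_⟩, rfl⟩
        · exact hh_suffix_elim hsuf (by simp [ht])
        · intro hc
          apply hninf
          rw [List.dropLast_cons₂]
          exact (hh_infix_fcons _).2 hc
      · cases b
        · -- true, false
          right
          refine ⟨t, ⟨ht, ?_, ?_⟩, rfl⟩
          · have h1 : [true,true] <:+ false :: t := hh_suffix_elim hsuf (by simp [ht])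
            exact hh_suffix_elim h1 (by omega)
          · intro hc
            apply hninf
            obtain ⟨c, t', rfl⟩ := List.exists_cons_of_ne_nil hne
            rw [List.dropLast_cons₂, List.dropLast_cons₂]
            exact (hh_infix_tcons _).2 hc
        · -- true, true : contradiction
          exfalso
          apply hninf
          obtain ⟨c, t', rfl⟩ := List.exists_cons_of_ne_nil hne
          rw [List.dropLast_cons₂, List.dropLast_cons₂]
          exact ⟨[], (c :: t').dropLast, by simp⟩
  · rintro (⟨l', ⟨hlen, hsuf, hninf⟩, rfl⟩ | ⟨l', ⟨hlen, hsuf, hninf⟩, rfl⟩)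
    · have hne : l' ≠ [] := by intro h; simp [h] at hlen
      refine ⟨by simp [hlen], hsuf.trans (List.suffix_cons _ _), ?_⟩
      cases l' with
      | nil => exact absurd rfl hne
      | cons b t =>
        rw [List.dropLast_cons₂, hh_infix_fcons]
        exact hninf
    · have hne : l' ≠ [] := by intro h; simp [h] at hlen
      refine ⟨by simp [hlen],
        (hsuf.trans (List.suffix_cons _ _)).trans (List.suffix_cons _ _), ?_⟩
      cases l' with
      | nil => exact absurd rfl hne
      | cons b t =>
        cases t with
        | nil => simp at *
        | cons c t' =>
          rw [List.dropLast_cons₂, List.dropLast_cons₂, hh_infix_tcons]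
          exact hninf

lemma fil_card (n : ℕ) : (Fil (n+4)).card = (Fil (n+3)).card + (Fil (n+2)).card := by
  rw [fil_succ, Finset.card_union_of_disjoint, Finset.card_image_of_injective _
      (fun a b h => by simpa using h), Finset.card_image_of_injective _
      (fun a b h => by simpa using h)]
  · rw [Finset.disjoint_left]
    rintro x hx hy
    simp only [Finset.mem_image] at hx hy
    rcases hx with ⟨a, _, rfl⟩
    rcases hy with ⟨b, _, h⟩
    simp at h

lemma fc_rec (n : ℕ) :
    firstCount [true,true] (n+4) = firstCount [true,true] (n+3) + firstCount [true,true] (n+2) := by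
  rw [fc_eq, fc_eq, fc_eq]; exact fil_card n

lemma fc1 : firstCount [true,true] 1 = 0 := by rw [fc_eq]; decide
lemma fc4 : firstCount [true,true] 4 = 2 := by rw [fc_eq]; decide

theorem stmt_7 :
    ∀ m : ℕ, 1 ≤ m →
      1 - ∑ n ∈ Finset.Icc 1 m, (firstCount [true, true] n : ℝ) * (1 / 2) ^ n
        = (firstCount [true, true] (m + 3) : ℝ) / 2 ^ m := by
  intro m hm
  induction m, hm using Nat.le_induction with
  | base =>
    simp [Finset.Icc_self, fc1, fc4]
  | succ m hm ih =>
    rw [Finset.sum_Icc_succ_top (by omega : 1 ≤ m + 1)]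
    have keyN : firstCount [true,true] (m+4) + firstCount [true,true] (m+1)
        = 2 * firstCount [true,true] (m+3) := by
      obtain ⟨j, rfl⟩ : ∃ j, m = j + 1 := ⟨m - 1, by omega⟩
      have h1 := fc_rec (j+1)
      have h2 := fc_rec j
      simp only [Nat.add_assoc] at h1 h2 ⊢
      norm_num at h1 h2 ⊢
      omega
    have key : (firstCount [true,true] (m+4) : ℝ) + firstCount [true,true] (m+1)
        = 2 * firstCount [true,true] (m+3) := by exact_mod_cast keyN
    have h2m : (2:ℝ)^m ≠ 0 := by positivity
    have e : (1:ℝ) - (∑ n ∈ Finset.Icc 1 m, (firstCount [true,true] n : ℝ) * (1/2)^n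
        + (firstCount [true,true] (m+1) : ℝ) * (1/2)^(m+1))
        = (1 - ∑ n ∈ Finset.Icc 1 m, (firstCount [true,true] n : ℝ) * (1/2)^n)
          - (firstCount [true,true] (m+1) : ℝ) * (1/2)^(m+1) := by ring
    rw [e, ih, show m+1+3 = m+4 from rfl]
    have hp : ((1:ℝ)/2) ^ (m+1) = 1 / 2 ^ (m+1) := by
      rw [div_pow, one_pow]
    rw [hp, mul_one_div, div_sub_div _ _ h2m (by positivity : (2:ℝ)^(m+1) ≠ 0),
      div_eq_div_iff (by positivity) (by positivity : (2:ℝ)^(m+1) ≠ 0)]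
    linear_combination (-(2:ℝ)^m * 2^(m+1)) * key
end

section
/- a_HHH(1) = a_HHH(2) = 0, a_HHH(3) = 1, and for all n ≥ 1, a_HHH(n+3) = a_HHH(n+2) + a_HHH(n+1) + a_HHH(n). -/
lemma card_len (n : ℕ) (P : List Bool → Prop) [DecidablePred P] :
    Nat.card {l : List Bool // l.length = n ∧ P l}
      = Fintype.card {v : List.Vector Bool n // P v.1} := by
  have e : {v : List.Vector Bool n // P v.1} ≃ {l : List Bool // l.length = n ∧ P l} :=
    Equiv.subtypeSubtypeEquivSubtypeInter (fun l : List Bool => l.length = n) P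
  rw [Nat.card_congr e.symm, Nat.card_eq_fintype_card]

lemma finite_aux (n : ℕ) (P : List Bool → Prop) :
    Finite {l : List Bool // l.length = n ∧ P l} := by
  haveI : Finite {l : List Bool // l.length = n} :=
    (inferInstance : Finite (List.Vector Bool n))
  exact Finite.of_equiv _ (Equiv.subtypeSubtypeEquivSubtypeInter (fun l : List Bool => l.length = n) P)

lemma infix_append_false (p q : List Bool) :
    [true, true, true] <:+: p ++ false :: q
      ↔ [true, true, true] <:+: p ∨ [true, true, true] <:+: q := by
  induction p with
  | nil => simp [List.infix_cons_iff, List.cons_prefix_cons]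
  | cons a p ih =>
    have key : ([true, true, true] <+: a :: (p ++ false :: q))
        ↔ [true, true, true] <+: a :: p := by
      constructor
      · intro h
        obtain ⟨ha, h2⟩ := List.cons_prefix_cons.1 h
        rcases p with _ | ⟨b, _ | ⟨c, p'⟩⟩
        · exact absurd (List.cons_prefix_cons.1 h2).1 (by simp)
        · obtain ⟨hb, h3⟩ := List.cons_prefix_cons.1 h2
          exact absurd (List.cons_prefix_cons.1 h3).1 (by simp)
        · obtain ⟨hb, h3⟩ := List.cons_prefix_cons.1 h2
          obtain ⟨hc, -⟩ := List.cons_prefix_cons.1 h3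
          subst ha; subst hb; subst hc
          exact ⟨p', rfl⟩
      · intro h
        exact h.trans (List.prefix_append (a :: p) (false :: q))
    rw [List.cons_append, List.infix_cons_iff, List.infix_cons_iff, ih, key]
    tauto

lemma icf1 (q : List Bool) :
    [true, true, true] <:+: false :: q ↔ [true, true, true] <:+: q := by
  simpa using infix_append_false [] q

lemma icf2 (q : List Bool) :
    [true, true, true] <:+: true :: false :: q ↔ [true, true, true] <:+: q := by
  have := infix_append_false [true] q
  simp only [List.cons_append, List.nil_append] at this
  rw [this]
  simp [show ¬ ([true,true,true] <:+: [true]) by decide]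

lemma icf3 (q : List Bool) :
    [true, true, true] <:+: true :: true :: false :: q ↔ [true, true, true] <:+: q := by
  have := infix_append_false [true, true] q
  simp only [List.cons_append, List.nil_append] at this
  rw [this]
  simp [show ¬ ([true,true,true] <:+: [true,true]) by decide]

noncomputable def hcard (k : ℕ) : ℕ :=
  Nat.card {p : List Bool // p.length = k ∧ ¬ [true, true, true] <:+: p}

lemma fch (n : ℕ) : firstCount [true, true, true] (n + 4) = hcard n := by
  symm
  apply Nat.card_congr
  refine Equiv.ofBijective
    (fun x => ⟨x.1 ++ [false, true, true, true], ?_, ?_, ?_⟩) ⟨?_, ?_⟩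
  · simp [x.2.1]
  · exact ⟨x.1 ++ [false], by simp⟩
  · have hd : (x.1 ++ [false, true, true, true]).dropLast = x.1 ++ false :: [true, true] := by
      rw [List.dropLast_append_of_ne_nil (by simp : [false, true, true, true] ≠ [])]
      rfl
    rw [hd, infix_append_false]
    rintro (h | h)
    · exact x.2.2 h
    · exact absurd h (by decide)
  · rintro ⟨p, hp⟩ ⟨r, hr⟩ h
    simp only [Subtype.mk.injEq] at h
    exact Subtype.ext (List.append_cancel_right h)
  · rintro ⟨l, hlen, hsuf, hni⟩
    obtain ⟨m, rfl⟩ := hsuf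
    have hm : m.length = n + 1 := by simp at hlen; omega
    have hd : (m ++ [true, true, true]).dropLast = m ++ [true, true] := by
      rw [List.dropLast_append_of_ne_nil (by simp : [true, true, true] ≠ [])]
      rfl
    rcases List.eq_nil_or_concat m with rfl | ⟨t, b, rfl⟩
    · simp at hm
    · simp only [List.concat_eq_append] at hm hni hd ⊢
      cases b
      · have hnt : ¬ [true, true, true] <:+: t := by
          intro h
          apply hni
          rw [hd, List.append_assoc]
          exact (infix_append_false t [true, true]).2 (Or.inl h)
        refine ⟨⟨t, by simp at hm; omega, hnt⟩, ?_⟩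
        apply Subtype.ext
        simp
      · exact (hni (by rw [hd, List.append_assoc]; exact ⟨t, [], by simp⟩)).elim

lemma h_rec (k : ℕ) : hcard (k + 3) = hcard (k + 2) + hcard (k + 1) + hcard k := by
  haveI := finite_aux (k+2) (fun p => ¬ [true, true, true] <:+: p)
  haveI := finite_aux (k+1) (fun p => ¬ [true, true, true] <:+: p)
  haveI := finite_aux k (fun p => ¬ [true, true, true] <:+: p)
  have e : ({p : List Bool // p.length = k + 2 ∧ ¬ [true, true, true] <:+: p}
      ⊕ {p : List Bool // p.length = k + 1 ∧ ¬ [true, true, true] <:+: p}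
      ⊕ {p : List Bool // p.length = k ∧ ¬ [true, true, true] <:+: p})
      ≃ {p : List Bool // p.length = k + 3 ∧ ¬ [true, true, true] <:+: p} := by
    refine Equiv.ofBijective (fun x => match x with
      | .inl q => ⟨false :: q.1, by simp [q.2.1], fun h => q.2.2 ((icf1 q.1).1 h)⟩
      | .inr (.inl q) => ⟨true :: false :: q.1, by simp [q.2.1], fun h => q.2.2 ((icf2 q.1).1 h)⟩
      | .inr (.inr q) => ⟨true :: true :: false :: q.1, by simp [q.2.1], fun h => q.2.2 ((icf3 q.1).1 h)⟩)
      ⟨?_, ?_⟩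
    · rintro (⟨p, hp⟩ | ⟨p, hp⟩ | ⟨p, hp⟩) (⟨r, hr⟩ | ⟨r, hr⟩ | ⟨r, hr⟩) h <;>
        simp at h <;> (try subst h) <;> rfl
    · rintro ⟨p, hlen, hni⟩
      rcases p with _ | ⟨a, _ | ⟨b, _ | ⟨c, r⟩⟩⟩
      · exact absurd hlen (by simp)
      · exact absurd hlen (by simp)
      · exact absurd hlen (by simp)
      · have hr : r.length = k := by simp at hlen; omega
        cases a
        · exact ⟨.inl ⟨b :: c :: r, by simp; omega, fun h => hni ((icf1 _).2 h)⟩, rfl⟩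
        · cases b
          · exact ⟨.inr (.inl ⟨c :: r, by simp; omega, fun h => hni ((icf2 _).2 h)⟩), rfl⟩
          · cases c
            · exact ⟨.inr (.inr ⟨r, hr, fun h => hni ((icf3 _).2 h)⟩), rfl⟩
            · exact absurd (⟨[], r, by simp⟩ : [true,true,true] <:+: true :: true :: true :: r) hni
  have := Nat.card_congr e.symm
  rw [Nat.card_sum, Nat.card_sum] at this
  rw [hcard, this, hcard, hcard, hcard, add_assoc]

lemma fc_eval (n : ℕ) :
    firstCount [true, true, true] n
      = Fintype.card {v : List.Vector Bool n //
          [true, true, true] <:+ v.1 ∧ ¬ ([true, true, true] <:+: v.1.dropLast)} :=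
  card_len n _

theorem stmt_8 :
    firstCount [true, true, true] 1 = 0 ∧ firstCount [true, true, true] 2 = 0 ∧
    firstCount [true, true, true] 3 = 1 ∧
    ∀ n : ℕ, 1 ≤ n →
      firstCount [true, true, true] (n + 3)
        = firstCount [true, true, true] (n + 2) + firstCount [true, true, true] (n + 1)
          + firstCount [true, true, true] n := by
  have v1 : firstCount [true, true, true] 1 = 0 := by rw [fc_eval]; decide
  have v2 : firstCount [true, true, true] 2 = 0 := by rw [fc_eval]; decide
  have v3 : firstCount [true, true, true] 3 = 1 := by rw [fc_eval]; decide
  have v4 : firstCount [true, true, true] 4 = 1 := by rw [fc_eval]; decide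
  have v5 : firstCount [true, true, true] 5 = 2 := by rw [fc_eval]; decide
  have v6 : firstCount [true, true, true] 6 = 4 := by rw [fc_eval]; decide
  refine ⟨v1, v2, v3, ?_⟩
  intro n hn
  match n, hn with
  | 1, _ => rw [v4, v3, v2, v1]
  | 2, _ => rw [v5, v4, v3, v2]
  | 3, _ => rw [v6, v5, v4, v3]
  | (m + 4), _ =>
    show firstCount [true, true, true] (m + 3 + 4)
        = firstCount [true, true, true] (m + 2 + 4) + firstCount [true, true, true] (m + 1 + 4)
          + firstCount [true, true, true] (m + 4)
    rw [fch (m + 3), fch (m + 2), fch (m + 1), fch m, h_rec]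
end

section
/- a_HTT(1) = a_HTT(2) = 0, a_HTT(3) = 1, and for all n ≥ 1, a_HTT(n+3) = 2·a_HTT(n+2) − a_HTT(n). -/
namespace StmtNine

abbrev W : List Bool := [true, false, false]

lemma suffix_eq {α : Type*} {s t l : List α} (hs : s <:+ l) (ht : t <:+ l)
    (h : s.length = t.length) : s = t := by
  obtain ⟨u, rfl⟩ := hs
  obtain ⟨v, hv⟩ := ht
  exact (List.append_inj' hv.symm h).2

lemma infix_dropLast_or_suffix {α : Type*} {w l : List α} (h : w <:+: l) :
    w <:+: l.dropLast ∨ w <:+ l := by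
  obtain ⟨s, t, rfl⟩ := h
  rcases t.eq_nil_or_concat' with rfl | ⟨t', x, rfl⟩
  · right; exact ⟨s, by simp⟩
  · left
    rw [show s ++ w ++ (t' ++ [x]) = (s ++ w ++ t') ++ [x] by simp, List.dropLast_concat]
    exact ⟨s, t', rfl⟩

lemma infix_of_dropLast {α : Type*} {w l : List α} (h : w <:+: l.dropLast) : w <:+: l :=
  h.trans (l.dropLast_prefix.isInfix)

instance finInst (n : ℕ) (P : List Bool → Prop) :
    Finite {l : List Bool // l.length = n ∧ P l} :=
  ((List.finite_length_eq Bool n).subset (fun _ hl => hl.1)).to_subtype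

lemma not_suffix_snoc_true (p : List Bool) : ¬ W <:+ p ++ [true] := by
  intro h
  have h1 : [false] <:+ p ++ [true] := List.IsSuffix.trans ⟨[true, false], rfl⟩ h
  have h2 : [true] <:+ p ++ [true] := ⟨p, rfl⟩
  simpa using suffix_eq h1 h2 rfl

lemma not_suffix_snoc_pair (p : List Bool) : ¬ W <:+ p ++ [true, false] := by
  intro h
  have h1 : [false, false] <:+ p ++ [true, false] :=
    List.IsSuffix.trans ⟨[true], rfl⟩ h
  have h2 : [true, false] <:+ p ++ [true, false] := ⟨p, rfl⟩
  simpa using suffix_eq h1 h2 rfl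

lemma not_infix_append_HT {p : List Bool} (hp : ¬ W <:+: p) : ¬ W <:+: p ++ [true, false] := by
  intro h
  rw [show p ++ [true, false] = (p ++ [true]) ++ [false] by simp] at h
  rcases infix_dropLast_or_suffix h with h | h
  · rw [List.dropLast_concat] at h
    rcases infix_dropLast_or_suffix h with h | h
    · rw [List.dropLast_concat] at h; exact hp h
    · exact not_suffix_snoc_true p h
  · rw [show (p ++ [true]) ++ [false] = p ++ [true, false] by simp] at h
    exact not_suffix_snoc_pair p h

noncomputable def bcount (n : ℕ) : ℕ :=
  Nat.card {l : List Bool // l.length = n ∧ ¬ W <:+: l}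

noncomputable abbrev a (n : ℕ) : ℕ :=
  Nat.card {l : List Bool // l.length = n ∧ W <:+ l ∧ ¬ (W <:+: l.dropLast)}

lemma cardA (n : ℕ) : a (n + 3) = bcount n := by
  apply Nat.card_congr
  apply Equiv.symm
  refine Equiv.ofBijective
    (fun p => ⟨p.1 ++ W, ?_, ⟨p.1, rfl⟩, ?_⟩) ⟨?_, ?_⟩
  · simp [p.2.1]
  · rw [show p.1 ++ W = (p.1 ++ [true, false]) ++ [false] by simp, List.dropLast_concat]
    exact not_infix_append_HT p.2.2
  · intro p q h
    exact Subtype.ext (List.append_inj_left' (congrArg Subtype.val h) rfl)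
  · rintro ⟨l, hlen, ⟨u, rfl⟩, hni⟩
    have hu : u.length = n := by simp at hlen; omega
    refine ⟨⟨u, hu, fun h => hni (h.trans ?_)⟩, rfl⟩
    rw [show u ++ W = (u ++ [true, false]) ++ [false] by simp, List.dropLast_concat]
    exact List.IsPrefix.isInfix ⟨[true, false], rfl⟩

lemma cardS (k : ℕ) :
    Nat.card {l : List Bool // l.length = k + 1 ∧ ¬ W <:+: l.dropLast} = 2 * bcount k := by
  have e : Bool × {p : List Bool // p.length = k ∧ ¬ W <:+: p} ≃
      {l : List Bool // l.length = k + 1 ∧ ¬ W <:+: l.dropLast} := by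
    refine Equiv.ofBijective
      (fun xp => ⟨xp.2.1 ++ [xp.1], ?_, ?_⟩) ⟨?_, ?_⟩
    · simp [xp.2.2.1]
    · rw [List.dropLast_concat]; exact xp.2.2.2
    · rintro ⟨x, p⟩ ⟨y, q⟩ h
      have h' := congrArg Subtype.val h
      simp only at h'
      obtain ⟨h1, h2⟩ := List.append_inj' h' rfl
      simp at h2
      simp [h2, Subtype.ext h1]
    · rintro ⟨l, hlen, hni⟩
      rcases l.eq_nil_or_concat' with rfl | ⟨t, x, rfl⟩
      · simp at hlen
      · rw [List.dropLast_concat] at hni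
        have ht : t.length = k := by simp at hlen; omega
        exact ⟨⟨x, ⟨t, ht, hni⟩⟩, rfl⟩
  rw [← Nat.card_congr e, Nat.card_prod]
  simp [bcount, Nat.card_eq_fintype_card]

lemma cardSplit (k : ℕ) :
    Nat.card {l : List Bool // l.length = k + 1 ∧ ¬ W <:+: l.dropLast} =
      bcount (k + 1) + a (k + 1) := by
  classical
  have e1 : {l : List Bool // l.length = k + 1 ∧ ¬ W <:+: l.dropLast} ≃
      {x : {l : List Bool // l.length = k + 1 ∧ ¬ W <:+: l.dropLast} // ¬ W <:+ x.1} ⊕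
      {x : {l : List Bool // l.length = k + 1 ∧ ¬ W <:+: l.dropLast} // W <:+ x.1} :=
    (Equiv.sumCompl _).symm.trans (Equiv.sumComm _ _)
  rw [Nat.card_congr e1, Nat.card_sum]
  have h1 : Nat.card {x : {l : List Bool // l.length = k + 1 ∧ ¬ W <:+: l.dropLast} //
      ¬ W <:+ x.1} = bcount (k + 1) := by
    refine Nat.card_congr ((Equiv.subtypeSubtypeEquivSubtypeInter
        (fun l : List Bool => l.length = k + 1 ∧ ¬ W <:+: l.dropLast)
        (fun l : List Bool => ¬ W <:+ l)).trans
      (Equiv.subtypeEquivRight (q := fun l => l.length = k + 1 ∧ ¬ W <:+: l) fun l => ?_))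
    constructor
    · rintro ⟨⟨hl1, h2⟩, h3⟩
      refine ⟨hl1, fun h => ?_⟩
      rcases infix_dropLast_or_suffix h with h | h
      · exact h2 h
      · exact h3 h
    · rintro ⟨hl1, h2⟩
      exact ⟨⟨hl1, fun h => h2 (infix_of_dropLast h)⟩, fun h => h2 h.isInfix⟩
  have h2 : Nat.card {x : {l : List Bool // l.length = k + 1 ∧ ¬ W <:+: l.dropLast} //
      W <:+ x.1} = a (k + 1) := by
    refine Nat.card_congr ((Equiv.subtypeSubtypeEquivSubtypeInter
        (fun l : List Bool => l.length = k + 1 ∧ ¬ W <:+: l.dropLast)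
        (fun l : List Bool => W <:+ l)).trans
      (Equiv.subtypeEquivRight
        (q := fun l => l.length = k + 1 ∧ W <:+ l ∧ ¬ W <:+: l.dropLast) fun l => ?_))
    tauto
  rw [h1, h2]

lemma cardB (k : ℕ) : 2 * bcount k = bcount (k + 1) + a (k + 1) := by
  rw [← cardS k, cardSplit k]

lemma b0 : bcount 0 = 1 := by
  haveI : Unique {l : List Bool // l.length = 0 ∧ ¬ W <:+: l} :=
    { default := ⟨[], rfl, by decide⟩
      uniq := fun x => Subtype.ext (List.eq_nil_of_length_eq_zero x.2.1) }
  exact Nat.card_unique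

lemma aSmall (n : ℕ) (h : n < 3) : a n = 0 := by
  haveI : IsEmpty {l : List Bool // l.length = n ∧ W <:+ l ∧ ¬ (W <:+: l.dropLast)} := by
    refine ⟨fun x => ?_⟩
    obtain ⟨l, hl, ⟨u, hu⟩, -⟩ := x
    have := congrArg List.length hu
    simp [hl] at this
    omega
  exact Nat.card_of_isEmpty

lemma b1 : bcount 1 = 2 := by
  have h := cardB 0; have h0 := b0; norm_num at h; have ha := aSmall 1 (by norm_num); omega

lemma b2 : bcount 2 = 4 := by
  have h := cardB 1; have h0 := b1; norm_num at h; have ha := aSmall 2 (by norm_num); omega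

end StmtNine


theorem stmt_9 :
    firstCount [true, false, false] 1 = 0 ∧ firstCount [true, false, false] 2 = 0 ∧
    firstCount [true, false, false] 3 = 1 ∧
    ∀ n : ℕ, 1 ≤ n →
      (firstCount [true, false, false] (n + 3) : ℤ)
        = 2 * (firstCount [true, false, false] (n + 2) : ℤ)
          - (firstCount [true, false, false] n : ℤ) := by
  have hfa : ∀ n, firstCount [true, false, false] n = StmtNine.a n := fun n => rfl
  have h3 : StmtNine.a 3 = 1 := by
    have h := StmtNine.cardA 0; have h0 := StmtNine.b0; norm_num at h; omega
  have h4 : StmtNine.a 4 = 2 := by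
    have h := StmtNine.cardA 1; have h0 := StmtNine.b1; norm_num at h; omega
  have h5 : StmtNine.a 5 = 4 := by
    have h := StmtNine.cardA 2; have h0 := StmtNine.b2; norm_num at h; omega
  refine ⟨?_, ?_, ?_, ?_⟩
  · rw [hfa]; exact StmtNine.aSmall 1 (by norm_num)
  · rw [hfa]; exact StmtNine.aSmall 2 (by norm_num)
  · rw [hfa]; exact h3
  · intro n hn
    simp only [hfa]
    rcases n with _ | _ | _ | m
    · exact absurd hn (by norm_num)
    · norm_num [h4, h3, StmtNine.aSmall 1 (by norm_num)]
    · norm_num [h5, h4, StmtNine.aSmall 2 (by norm_num)]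
    · show (StmtNine.a (m + 3 + 3) : ℤ) = 2 * (StmtNine.a (m + 3 + 2) : ℤ)
        - (StmtNine.a (m + 3) : ℤ)
      rw [show m + 3 + 2 = m + 2 + 3 from rfl]
      rw [StmtNine.cardA (m + 3), StmtNine.cardA (m + 2), StmtNine.cardA m]
      have h1 := StmtNine.cardB (m + 2)
      have h2 := StmtNine.cardA m
      rw [show m + 2 + 1 = m + 3 from rfl] at h1
      omega
end

section
/- For all n ≥ 1, a_HTT(n) = a_HHT(n); i.e., the words HTT and HHT have the same number of length-n binary sequences in which they first appear at position n. -/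
private lemma infix_map_not_iff (W l : List Bool) :
    W.map not <:+: l.map not ↔ W <:+: l := by
  constructor
  · intro h
    have := h.map not
    simpa [List.map_map, Function.comp_def] using this
  · exact fun h => h.map not

private lemma boundaryA (p : List Bool) :
    [true, false, false] <:+: p ++ [true, false] ↔ [true, false, false] <:+: p := by
  rw [← List.reverse_infix]
  simp only [List.reverse_append]
  rw [show ([true, false] : List Bool).reverse = [false, true] by rfl]
  rw [show (([true, false, false] : List Bool)).reverse = [false, false, true] by rfl]
  rw [show ([false, true] : List Bool) ++ p.reverse = false :: true :: p.reverse by rfl]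
  constructor
  · intro h
    rcases List.infix_cons_iff.mp h with h | h
    · rw [List.cons_prefix_cons, List.cons_prefix_cons] at h
      simp at h
    · rcases List.infix_cons_iff.mp h with h | h
      · rw [List.cons_prefix_cons] at h
        simp at h
      · exact List.reverse_infix.mp h
  · intro h
    exact (List.reverse_infix.mpr h).trans
      ((List.suffix_cons _ _).trans (List.suffix_cons _ _)).isInfix

private lemma boundaryB (p : List Bool) :
    [true, true, false] <:+: p ++ [true, true] ↔ [true, true, false] <:+: p := by
  rw [← List.reverse_infix]
  simp only [List.reverse_append]
  rw [show ([true, true] : List Bool).reverse = [true, true] by rfl]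
  rw [show (([true, true, false] : List Bool)).reverse = [false, true, true] by rfl]
  rw [show ([true, true] : List Bool) ++ p.reverse = true :: true :: p.reverse by rfl]
  constructor
  · intro h
    rcases List.infix_cons_iff.mp h with h | h
    · rw [List.cons_prefix_cons] at h
      simp at h
    · rcases List.infix_cons_iff.mp h with h | h
      · rw [List.cons_prefix_cons] at h
        simp at h
      · exact List.reverse_infix.mp h
  · intro h
    exact (List.reverse_infix.mpr h).trans
      ((List.suffix_cons _ _).trans (List.suffix_cons _ _)).isInfix

private lemma transferAB (p : List Bool) :
    [true, true, false] <:+: (p.map not).reverse ↔ [true, false, false] <:+: p := by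
  constructor
  · intro h
    exact (infix_map_not_iff [true, false, false] p).mp (List.reverse_infix.mp h)
  · intro h
    exact List.reverse_infix.mpr ((infix_map_not_iff [true, false, false] p).mpr h)

private lemma transferBA (p : List Bool) :
    [true, false, false] <:+: (p.map not).reverse ↔ [true, true, false] <:+: p := by
  constructor
  · intro h
    exact (infix_map_not_iff [true, true, false] p).mp (List.reverse_infix.mp h)
  · intro h
    exact List.reverse_infix.mpr ((infix_map_not_iff [true, true, false] p).mpr h)

private lemma decomp {m : ℕ} {W l : List Bool} (hW : W.length = 3)
    (hlen : l.length = m + 3) (hsuf : W <:+ l) : l = l.take m ++ W := by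
  obtain ⟨s, rfl⟩ := hsuf
  have hs : s.length = m := by
    rw [List.length_append, hW] at hlen; omega
  rw [List.take_left' hs]

private lemma invol (p : List Bool) :
    (((p.map not).reverse).map not).reverse = p := by
  simp [List.map_reverse, List.map_map, Function.comp_def]



private lemma mem_target (m : ℕ) (p : List Bool) (hp : p.length = m)
    (hni : ¬ [true, false, false] <:+: p) :
    ((p.map not).reverse ++ [true, true, false]).length = m + 3 ∧
      [true, true, false] <:+ (p.map not).reverse ++ [true, true, false] ∧
      ¬ [true, true, false] <:+: ((p.map not).reverse ++ [true, true, false]).dropLast := by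
  refine ⟨by simp [hp], List.suffix_append _ _, ?_⟩
  rw [List.dropLast_append_of_ne_nil (by simp : ([true, true, false] : List Bool) ≠ [])]
  rw [show ([true, true, false] : List Bool).dropLast = [true, true] by rfl]
  rw [boundaryB, transferAB]
  exact hni

private lemma mem_source (m : ℕ) (p : List Bool) (hp : p.length = m)
    (hni : ¬ [true, true, false] <:+: p) :
    ((p.map not).reverse ++ [true, false, false]).length = m + 3 ∧
      [true, false, false] <:+ (p.map not).reverse ++ [true, false, false] ∧
      ¬ [true, false, false] <:+: ((p.map not).reverse ++ [true, false, false]).dropLast := by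
  refine ⟨by simp [hp], List.suffix_append _ _, ?_⟩
  rw [List.dropLast_append_of_ne_nil (by simp : ([true, false, false] : List Bool) ≠ [])]
  rw [show ([true, false, false] : List Bool).dropLast = [true, false] by rfl]
  rw [boundaryA, transferBA]
  exact hni

theorem stmt_11 :
    ∀ n : ℕ, 1 ≤ n → firstCount [true, false, false] n = firstCount [true, true, false] n := by
  intro n _
  by_cases hn : n < 3
  · have e1 : IsEmpty {l : List Bool // l.length = n ∧ [true, false, false] <:+ l ∧
        ¬ ([true, false, false] <:+: l.dropLast)} := by
      refine ⟨fun ⟨l, h1, h2, _⟩ => ?_⟩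
      have := h2.length_le
      simp [h1] at this
      omega
    have e2 : IsEmpty {l : List Bool // l.length = n ∧ [true, true, false] <:+ l ∧
        ¬ ([true, true, false] <:+: l.dropLast)} := by
      refine ⟨fun ⟨l, h1, h2, _⟩ => ?_⟩
      have := h2.length_le
      simp [h1] at this
      omega
    rw [firstCount, firstCount, Nat.card_of_isEmpty, Nat.card_of_isEmpty]
  · push_neg at hn
    obtain ⟨m, rfl⟩ : ∃ m, n = m + 3 := ⟨n - 3, by omega⟩
    apply Nat.card_congr
    refine ⟨fun x => ⟨((x.1.take m).map not).reverse ++ [true, true, false], ?_⟩,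
      fun x => ⟨((x.1.take m).map not).reverse ++ [true, false, false], ?_⟩, ?_, ?_⟩
    · obtain ⟨l, h1, h2, h3⟩ := x
      have hd := decomp (by rfl) h1 h2
      have hplen : (l.take m).length = m := by
        simp [h1]
      have hni : ¬ [true, false, false] <:+: l.take m := by
        intro hc
        apply h3
        rw [hd, List.dropLast_append_of_ne_nil (by simp : ([true, false, false] : List Bool) ≠ [])]
        rw [show ([true, false, false] : List Bool).dropLast = [true, false] by rfl]
        exact (boundaryA _).mpr hc
      exact mem_target m _ hplen hni
    · obtain ⟨l, h1, h2, h3⟩ := x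
      have hd := decomp (by rfl) h1 h2
      have hplen : (l.take m).length = m := by
        simp [h1]
      have hni : ¬ [true, true, false] <:+: l.take m := by
        intro hc
        apply h3
        rw [hd, List.dropLast_append_of_ne_nil (by simp : ([true, true, false] : List Bool) ≠ [])]
        rw [show ([true, true, false] : List Bool).dropLast = [true, true] by rfl]
        exact (boundaryB _).mpr hc
      exact mem_source m _ hplen hni
    · rintro ⟨l, h1, h2, h3⟩
      have hd := decomp (by rfl) h1 h2
      have hplen : ((l.take m).map not).reverse.length = m := by simp [h1]
      ext1
      dsimp only
      rw [List.take_left' hplen, invol]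
      exact hd.symm
    · rintro ⟨l, h1, h2, h3⟩
      have hd := decomp (by rfl) h1 h2
      have hplen : ((l.take m).map not).reverse.length = m := by simp [h1]
      ext1
      dsimp only
      rw [List.take_left' hplen, invol]
      exact hd.symm
end

section
/- a_HTH(1) = a_HTH(2) = 0, a_HTH(3) = 1, and for all n ≥ 1, a_HTH(n+3) = 2·a_HTH(n+2) − a_HTH(n+1) + a_HTH(n). -/
open List

namespace Stmt12Aux

noncomputable section
open scoped Classical

/-- all boolean lists of length n -/
def FS : ℕ → Finset (List Bool)
  | 0 => {([] : List Bool)}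
  | n+1 => ((FS n).image (· ++ [false])) ∪ ((FS n).image (· ++ [true]))

lemma mem_FS : ∀ {n : ℕ} {l : List Bool}, l ∈ FS n ↔ l.length = n := by
  intro n
  induction n with
  | zero => intro l; simp [FS, List.length_eq_zero_iff]
  | succ n ih =>
    intro l
    simp only [FS, Finset.mem_union, Finset.mem_image, ih]
    constructor
    · rintro (⟨a, ha, rfl⟩ | ⟨a, ha, rfl⟩) <;> simp [ha]
    · intro hl
      have hne : l ≠ [] := by intro h; simp [h] at hl
      have hd : l.dropLast ++ [l.getLast hne] = l := List.dropLast_append_getLast hne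
      have hlen : l.dropLast.length = n := by
        rw [List.length_dropLast, hl]
        omega
      cases hb : l.getLast hne with
      | false => left; exact ⟨l.dropLast, hlen, by rw [← hb, hd]⟩
      | true => right; exact ⟨l.dropLast, hlen, by rw [← hb, hd]⟩

def cnt (P : List Bool → Prop) (n : ℕ) : ℕ := ((FS n).filter P).card

lemma cnt_congr {P Q : List Bool → Prop} (h : ∀ l, P l ↔ Q l) (n : ℕ) : cnt P n = cnt Q n := by
  unfold cnt
  congr 1
  exact Finset.filter_congr (fun l _ => by rw [h l])

lemma cnt_succ (P : List Bool → Prop) (n : ℕ) :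
    cnt P (n+1) = cnt (fun l => P (l ++ [false])) n + cnt (fun l => P (l ++ [true])) n := by
  have hdisj : Disjoint ((FS n).image (· ++ [false])) ((FS n).image (· ++ [true])) := by
    rw [Finset.disjoint_left]
    rintro a ha hb
    simp only [Finset.mem_image] at ha hb
    obtain ⟨x, -, rfl⟩ := ha
    obtain ⟨y, -, hy⟩ := hb
    have := congrArg List.getLast? hy
    simp [List.getLast?_concat] at this
  unfold cnt
  rw [show FS (n+1) = ((FS n).image (· ++ [false])) ∪ ((FS n).image (· ++ [true])) from rfl,
    Finset.filter_union,
    Finset.card_union_of_disjoint (Finset.disjoint_filter_filter hdisj),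
    Finset.filter_image, Finset.filter_image,
    Finset.card_image_of_injective _ (List.append_left_injective [false]),
    Finset.card_image_of_injective _ (List.append_left_injective [true])]

lemma cnt_or {P Q : List Bool → Prop} (h : ∀ l, ¬ (P l ∧ Q l)) (n : ℕ) :
    cnt (fun l => P l ∨ Q l) n = cnt P n + cnt Q n := by
  unfold cnt
  have hd : Disjoint (Finset.filter P (FS n)) (Finset.filter Q (FS n)) := by
    rw [Finset.disjoint_left]
    intro a ha hb
    rw [Finset.mem_filter] at ha hb
    exact h a ⟨ha.2, hb.2⟩
  rw [← Finset.card_union_of_disjoint hd]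
  congr 1
  ext a
  simp only [Finset.mem_filter, Finset.mem_union]
  tauto

lemma cnt_false (n : ℕ) : cnt (fun _ => False) n = 0 := by
  unfold cnt; simp

/-- key list lemmas -/
lemma concat_suffix_concat (w l : List Bool) (c b : Bool) :
    (w ++ [c]) <:+ (l ++ [b]) ↔ c = b ∧ w <:+ l := by
  rw [← List.reverse_prefix, ← List.reverse_prefix (l₁ := w)]
  simp [List.cons_prefix_cons]

lemma infix_concat (w l : List Bool) (b : Bool) :
    (w <:+: (l ++ [b])) ↔ (w <:+: l) ∨ (w <:+ (l ++ [b])) := by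
  rw [← List.reverse_infix (l₂ := l ++ [b]), ← List.reverse_infix (l₂ := l),
    ← List.reverse_prefix (l₂ := l ++ [b])]
  simp only [List.reverse_append, List.reverse_singleton, List.singleton_append]
  rw [List.infix_cons_iff]
  tauto

def HTH : List Bool := [true, false, true]

def Av (l : List Bool) : Prop := ¬ (HTH <:+: l)

lemma hth_suffix_concat_true (l : List Bool) :
    HTH <:+ (l ++ [true]) ↔ [true, false] <:+ l := by
  rw [show HTH = [true,false] ++ [true] from rfl, concat_suffix_concat]
  simp

lemma hth_suffix_concat_false (l : List Bool) : ¬ (HTH <:+ (l ++ [false])) := by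
  rw [show HTH = [true,false] ++ [true] from rfl, concat_suffix_concat]
  simp

lemma s1_concat (l : List Bool) (c b : Bool) : [c] <:+ (l ++ [b]) ↔ c = b := by
  rw [show ([c] : List Bool) = [] ++ [c] from rfl, concat_suffix_concat]
  simp

lemma s2_concat (l : List Bool) (c d b : Bool) : [c, d] <:+ (l ++ [b]) ↔ d = b ∧ [c] <:+ l := by
  rw [show ([c, d] : List Bool) = [c] ++ [d] from rfl, concat_suffix_concat]

lemma s1_s2_excl {l : List Bool} (h1 : [true] <:+ l) (h2 : [true, false] <:+ l) : False := by
  obtain ⟨t, rfl⟩ := h1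
  rw [show t ++ [true] = t ++ [true] from rfl, show ([true,false] : List Bool) = [true] ++ [false] from rfl,
    concat_suffix_concat] at h2
  exact absurd h2.1 (by simp)

lemma Av_concat_false (l : List Bool) : Av (l ++ [false]) ↔ Av l := by
  unfold Av
  rw [infix_concat]
  simp [hth_suffix_concat_false l]

lemma Av_concat_true (l : List Bool) : Av (l ++ [true]) ↔ Av l ∧ ¬ [true, false] <:+ l := by
  unfold Av
  rw [infix_concat, hth_suffix_concat_true]
  tauto

def P0 (l : List Bool) : Prop := Av l ∧ ¬ ([true] <:+ l) ∧ ¬ ([true, false] <:+ l)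
def P1 (l : List Bool) : Prop := Av l ∧ [true] <:+ l
def P2 (l : List Bool) : Prop := Av l ∧ [true, false] <:+ l
def PF (l : List Bool) : Prop := HTH <:+ l ∧ Av l.dropLast

lemma c1_succ (n : ℕ) : cnt P1 (n+1) = cnt P0 n + cnt P1 n := by
  rw [cnt_succ]
  have h1 : cnt (fun l => P1 (l ++ [false])) n = cnt (fun _ => False) n := by
    apply cnt_congr; intro l
    simp only [P1, s1_concat, iff_false]
    rintro ⟨-, h⟩; exact absurd h (by simp)
  have h2 : cnt (fun l => P1 (l ++ [true])) n = cnt (fun l => P0 l ∨ P1 l) n := by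
    apply cnt_congr; intro l
    simp only [P1, s1_concat, Av_concat_true, and_true, P0]
    constructor
    · rintro ⟨ha, hs⟩
      by_cases h1 : [true] <:+ l
      · exact Or.inr ⟨ha, h1⟩
      · exact Or.inl ⟨ha, h1, hs⟩
    · rintro (⟨ha, -, hs⟩ | ⟨ha, h1⟩)
      · exact ⟨ha, hs⟩
      · exact ⟨ha, fun h2 => s1_s2_excl h1 h2⟩
  rw [h1, h2, cnt_false, cnt_or]
  · omega
  · rintro l ⟨⟨-, h1, -⟩, ⟨-, h2⟩⟩; exact h1 h2

lemma c2_succ (n : ℕ) : cnt P2 (n+1) = cnt P1 n := by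
  rw [cnt_succ]
  have h1 : cnt (fun l => P2 (l ++ [false])) n = cnt P1 n := by
    apply cnt_congr; intro l
    simp only [P2, s2_concat, Av_concat_false, P1]
    tauto
  have h2 : cnt (fun l => P2 (l ++ [true])) n = cnt (fun _ => False) n := by
    apply cnt_congr; intro l
    simp only [P2, s2_concat, iff_false]
    rintro ⟨-, h, -⟩; exact absurd h (by simp)
  rw [h1, h2, cnt_false]
  omega

lemma c0_succ (n : ℕ) : cnt P0 (n+1) = cnt P0 n + cnt P2 n := by
  rw [cnt_succ]
  have h1 : cnt (fun l => P0 (l ++ [false])) n = cnt (fun l => P0 l ∨ P2 l) n := by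
    apply cnt_congr; intro l
    unfold P0 P2
    constructor
    · rintro ⟨ha, -, hs⟩
      rw [Av_concat_false] at ha
      rw [s2_concat] at hs
      have hs' : ¬ [true] <:+ l := fun h => hs ⟨rfl, h⟩
      by_cases h2 : [true, false] <:+ l
      · exact Or.inr ⟨ha, h2⟩
      · exact Or.inl ⟨ha, hs', h2⟩
    · rintro (⟨ha, h1, -⟩ | ⟨ha, h2⟩)
      · exact ⟨(Av_concat_false l).2 ha, by rw [s1_concat]; simp,
          by rw [s2_concat]; exact fun h => h1 h.2⟩
      · exact ⟨(Av_concat_false l).2 ha, by rw [s1_concat]; simp,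
          by rw [s2_concat]; exact fun h => s1_s2_excl h.2 h2⟩
  have h2 : cnt (fun l => P0 (l ++ [true])) n = cnt (fun _ => False) n := by
    apply cnt_congr; intro l
    unfold P0
    simp only [iff_false]
    rintro ⟨-, h, -⟩; exact h ((s1_concat l true true).2 rfl)
  rw [h1, h2, cnt_false, cnt_or]
  · omega
  · rintro l ⟨⟨-, -, h1⟩, ⟨-, h2⟩⟩; exact h1 h2

lemma cF_succ (n : ℕ) : cnt PF (n+1) = cnt P2 n := by
  rw [cnt_succ]
  have h1 : cnt (fun l => PF (l ++ [false])) n = cnt (fun _ => False) n := by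
    apply cnt_congr; intro l
    simp only [PF, iff_false]
    rintro ⟨h, -⟩; exact hth_suffix_concat_false l h
  have h2 : cnt (fun l => PF (l ++ [true])) n = cnt P2 n := by
    apply cnt_congr; intro l
    simp only [PF, hth_suffix_concat_true, List.dropLast_concat, P2]
    tauto
  rw [h1, h2, cnt_false]
  omega

lemma cnt_P0_zero : cnt P0 0 = 1 := by
  unfold cnt
  rw [show FS 0 = {([] : List Bool)} from rfl, Finset.filter_singleton, if_pos]
  · rfl
  · refine ⟨?_, ?_, ?_⟩ <;> simp [Av, HTH]
lemma cnt_P1_zero : cnt P1 0 = 0 := by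
  unfold cnt
  rw [show FS 0 = {([] : List Bool)} from rfl, Finset.filter_singleton, if_neg]
  · rfl
  · rintro ⟨-, h⟩; simp at h
lemma cnt_P2_zero : cnt P2 0 = 0 := by
  unfold cnt
  rw [show FS 0 = {([] : List Bool)} from rfl, Finset.filter_singleton, if_neg]
  · rfl
  · rintro ⟨-, h⟩; simp at h

end

end Stmt12Aux

open Stmt12Aux in
lemma firstCount_eq_cnt (n : ℕ) : firstCount [true, false, true] n = cnt PF n := by
  classical
  unfold firstCount
  have : cnt PF n = Nat.card {l : List Bool // l ∈ (FS n).filter PF} := by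
    rw [Nat.card_eq_fintype_card, Fintype.card_coe]
    rfl
  rw [this]
  apply Nat.card_congr
  apply Equiv.subtypeEquivRight
  intro l
  simp only [Finset.mem_filter, mem_FS, PF, Av, HTH]
  try tauto

open Stmt12Aux in
theorem stmt_12 :
    firstCount [true, false, true] 1 = 0 ∧ firstCount [true, false, true] 2 = 0 ∧
    firstCount [true, false, true] 3 = 1 ∧
    ∀ n : ℕ, 1 ≤ n →
      (firstCount [true, false, true] (n + 3) : ℤ)
        = 2 * (firstCount [true, false, true] (n + 2) : ℤ)
          - (firstCount [true, false, true] (n + 1) : ℤ)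
          + (firstCount [true, false, true] n : ℤ) := by
  refine ⟨?_, ?_, ?_, ?_⟩
  · rw [firstCount_eq_cnt, show (1 : ℕ) = 0 + 1 from rfl, cF_succ, cnt_P2_zero]
  · rw [firstCount_eq_cnt, show (2 : ℕ) = 1 + 1 from rfl, cF_succ,
      show (1 : ℕ) = 0 + 1 from rfl, c2_succ, cnt_P1_zero]
  · rw [firstCount_eq_cnt, show (3 : ℕ) = 2 + 1 from rfl, cF_succ,
      show (2 : ℕ) = 1 + 1 from rfl, c2_succ, show (1 : ℕ) = 0 + 1 from rfl, c1_succ,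
      cnt_P0_zero, cnt_P1_zero]
  · rintro n hn
    obtain ⟨m, rfl⟩ : ∃ m, n = m + 1 := ⟨n - 1, by omega⟩
    have e4 : firstCount [true, false, true] (m + 1 + 3) = cnt P0 m + cnt P2 m + (cnt P0 m + cnt P1 m) := by
      rw [firstCount_eq_cnt, show m + 1 + 3 = (m + 3) + 1 by ring, cF_succ,
        show m + 3 = (m + 2) + 1 by ring, c2_succ, show m + 2 = (m + 1) + 1 by ring, c1_succ,
        c0_succ, c1_succ]
    have e3 : firstCount [true, false, true] (m + 1 + 2) = cnt P0 m + cnt P1 m := by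
      rw [firstCount_eq_cnt, show m + 1 + 2 = (m + 2) + 1 by ring, cF_succ,
        show m + 2 = (m + 1) + 1 by ring, c2_succ, c1_succ]
    have e2 : firstCount [true, false, true] (m + 1 + 1) = cnt P1 m := by
      rw [firstCount_eq_cnt, show m + 1 + 1 = (m + 1) + 1 by ring, cF_succ, c2_succ]
    have e1 : firstCount [true, false, true] (m + 1) = cnt P2 m := by
      rw [firstCount_eq_cnt, cF_succ]
    rw [e1, e2, e3, e4]
    push_cast
    all_goals ring
end

section
/- For every m ≥ 1, the probability that HHH has not appeared within the first m tosses equals (2·a_HHH(m+3) − a_HHH(m))·(1/2)^m; that is, 1 − ∑_{n=1}^{m} a_HHH(n) · (1/2)^n = (2·a_HHH(m+3) − a_HHH(m)) / 2^m. -/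
namespace Stmt16

/-- The word HHH. -/
def W : List Bool := [true, true, true]

/-- Lists of length n where W first occurs exactly at the end. -/
def A (n : ℕ) : Set (List Bool) := {l | l.length = n ∧ W <:+ l ∧ ¬ W <:+: l.dropLast}
/-- Lists of length n avoiding W. -/
def B (n : ℕ) : Set (List Bool) := {l | l.length = n ∧ ¬ W <:+: l}
/-- Lists of length n whose dropLast avoids W. -/
def C (n : ℕ) : Set (List Bool) := {l | l.length = n ∧ ¬ W <:+: l.dropLast}

lemma finA (n : ℕ) : (A n).Finite :=
  (List.finite_length_eq Bool n).subset fun _ hl => hl.1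
lemma finB (n : ℕ) : (B n).Finite :=
  (List.finite_length_eq Bool n).subset fun _ hl => hl.1
lemma finC (n : ℕ) : (C n).Finite :=
  (List.finite_length_eq Bool n).subset fun _ hl => hl.1

lemma firstCount_eq (n : ℕ) : firstCount W n = (A n).ncard :=
  Nat.card_coe_set_eq (A n)

/-- An occurrence of a word in `l` either avoids the last letter or is a suffix. -/
lemma infix_split {V l : List Bool} : V <:+: l ↔ V <:+: l.dropLast ∨ V <:+ l := by
  constructor
  · rintro ⟨s, t, h⟩
    rcases t.eq_nil_or_concat with rfl | ⟨t', b, rfl⟩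
    · right; exact ⟨s, by simpa using h⟩
    · left
      refine ⟨s, t', ?_⟩
      have : l = (s ++ V ++ t') ++ [b] := by
        rw [← h]; simp [List.concat_eq_append]
      rw [this, List.dropLast_concat]
  · rintro (h | h)
    · exact h.trans (List.dropLast_prefix l).isInfix
    · exact h.isInfix

lemma suffix_eq_of_length {l₁ l₂ l : List Bool} (h1 : l₁ <:+ l) (h2 : l₂ <:+ l)
    (h : l₁.length = l₂.length) : l₁ = l₂ := by
  rw [List.suffix_iff_eq_drop] at h1 h2
  rw [h1, h2, h]

lemma not_suffix_F (u : List Bool) : ¬ W <:+ u ++ [false] := by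
  intro h
  have hw : [true] <:+ W := ⟨[true, true], rfl⟩
  have h1 : [true] <:+ u ++ [false] := List.IsSuffix.trans hw h
  have h2 : [false] <:+ u ++ [false] := List.suffix_append u [false]
  have := suffix_eq_of_length h1 h2 rfl
  simp at this

lemma not_suffix_FT (u : List Bool) : ¬ W <:+ u ++ [false, true] := by
  intro h
  have hw : [true, true] <:+ W := ⟨[true], rfl⟩
  have h1 : [true, true] <:+ u ++ [false, true] := List.IsSuffix.trans hw h
  have h2 : [false, true] <:+ u ++ [false, true] := List.suffix_append u _
  have := suffix_eq_of_length h1 h2 rfl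
  simp at this

lemma not_suffix_FTT (u : List Bool) : ¬ W <:+ u ++ [false, true, true] := by
  intro h
  have h2 : [false, true, true] <:+ u ++ [false, true, true] := List.suffix_append u _
  have := suffix_eq_of_length h h2 rfl
  simp [W] at this

lemma avoid_F {u : List Bool} (h : ¬ W <:+: u) : ¬ W <:+: u ++ [false] := by
  rw [infix_split, List.dropLast_concat]
  rintro (h' | h')
  · exact h h'
  · exact not_suffix_F u h'

lemma avoid_FT {u : List Bool} (h : ¬ W <:+: u) : ¬ W <:+: u ++ [false, true] := by
  have e : u ++ [false, true] = (u ++ [false]) ++ [true] := by simp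
  rw [e, infix_split, List.dropLast_concat, ← e]
  rintro (h' | h')
  · exact avoid_F h h'
  · exact not_suffix_FT u h'

lemma avoid_FTT {u : List Bool} (h : ¬ W <:+: u) : ¬ W <:+: u ++ [false, true, true] := by
  have e : u ++ [false, true, true] = (u ++ [false, true]) ++ [true] := by simp
  rw [e, infix_split, List.dropLast_concat, ← e]
  rintro (h' | h')
  · exact avoid_FT h h'
  · exact not_suffix_FTT u h'

/-- Appending a letter to an avoiding word. -/
lemma C_succ_eq (n : ℕ) :
    C (n + 1) = ((fun u => u ++ [true]) '' B n) ∪ ((fun u => u ++ [false]) '' B n) := by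
  ext l
  constructor
  · rintro ⟨hlen, havoid⟩
    have hne : l ≠ [] := by intro h; rw [h] at hlen; simp at hlen
    have hdec : l.dropLast ++ [l.getLast hne] = l := List.dropLast_concat_getLast hne
    have hmem : l.dropLast ∈ B n := by
      refine ⟨?_, havoid⟩
      have : l.dropLast.length = l.length - 1 := List.length_dropLast
      omega
    cases hb : l.getLast hne
    · right; exact ⟨l.dropLast, hmem, by rw [← hb]; exact hdec⟩
    · left; exact ⟨l.dropLast, hmem, by rw [← hb]; exact hdec⟩
  · rintro (⟨u, ⟨hlen, havoid⟩, rfl⟩ | ⟨u, ⟨hlen, havoid⟩, rfl⟩) <;>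
      exact ⟨by simp [hlen], by rw [List.dropLast_concat]; exact havoid⟩

lemma card_C_succ (n : ℕ) : (C (n + 1)).ncard = 2 * (B n).ncard := by
  rw [C_succ_eq]
  have hinj : ∀ b : Bool, Function.Injective (fun u : List Bool => u ++ [b]) := by
    intro b x y h
    exact (List.append_inj' h rfl).1
  rw [Set.ncard_union_eq ?_ ((finB n).image _) ((finB n).image _),
    Set.ncard_image_of_injective _ (hinj true), Set.ncard_image_of_injective _ (hinj false)]
  · ring
  · rw [Set.disjoint_left]
    rintro l ⟨u, _, rfl⟩ ⟨v, _, hv⟩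
    have := (List.append_inj' hv rfl).2
    simp at this

lemma C_succ_union (n : ℕ) : C (n + 1) = B (n + 1) ∪ A (n + 1) := by
  ext l
  constructor
  · rintro ⟨hlen, havoid⟩
    by_cases hs : W <:+ l
    · exact Or.inr ⟨hlen, hs, havoid⟩
    · refine Or.inl ⟨hlen, ?_⟩
      rw [infix_split]
      rintro (h | h)
      · exact havoid h
      · exact hs h
  · rintro (⟨hlen, havoid⟩ | ⟨hlen, _, havoid⟩)
    · exact ⟨hlen, fun h => havoid (h.trans (List.dropLast_prefix l).isInfix)⟩
    · exact ⟨hlen, havoid⟩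

lemma card_split (n : ℕ) : (B (n + 1)).ncard + (A (n + 1)).ncard = 2 * (B n).ncard := by
  rw [← card_C_succ n, C_succ_union]
  rw [Set.ncard_union_eq ?_ (finB _) (finA _)]
  rw [Set.disjoint_left]
  rintro l ⟨_, havoid⟩ ⟨_, hs, _⟩
  exact havoid hs.isInfix

lemma A_eq (n : ℕ) : A (n + 4) = (fun u => u ++ [false, true, true, true]) '' B n := by
  ext l
  constructor
  · rintro ⟨hlen, ⟨s, hs⟩, havoid⟩
    have hslen : s.length = n + 1 := by
      have := congrArg List.length hs
      simp [W] at this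
      omega
    rcases s.eq_nil_or_concat with rfl | ⟨u, c, rfl⟩
    · simp at hslen
    rw [List.concat_eq_append] at hs hslen
    have hdl : l.dropLast = u ++ [c, true, true] := by
      have e : l = (u ++ [c, true, true]) ++ [true] := by rw [← hs]; simp [W]
      rw [e, List.dropLast_concat]
    have hc : c = false := by
      by_contra hc
      rw [Bool.not_eq_false] at hc
      apply havoid
      rw [hdl, hc]
      exact ⟨u, [], by simp [W]⟩
    refine ⟨u, ⟨by simp at hslen; omega, ?_⟩, ?_⟩
    · intro h
      exact havoid (h.trans (by rw [hdl]; exact (List.prefix_append u _).isInfix))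
    · rw [← hs, hc]; simp [W]
  · rintro ⟨u, ⟨hlen, havoid⟩, rfl⟩
    refine ⟨by simp [hlen], ⟨u ++ [false], by simp [W]⟩, ?_⟩
    show ¬ W <:+: (u ++ [false, true, true, true]).dropLast
    have e : u ++ [false, true, true, true] = (u ++ [false, true, true]) ++ [true] := by simp
    rw [e, List.dropLast_concat]
    exact avoid_FTT havoid

lemma card_A (n : ℕ) : (A (n + 4)).ncard = (B n).ncard := by
  rw [A_eq, Set.ncard_image_of_injective _ fun x y h => (List.append_inj' h rfl).1]

lemma card_A_one : (A 1).ncard = 0 := by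
  have : A 1 = ∅ := by
    ext l
    simp only [Set.mem_empty_iff_false, iff_false]
    rintro ⟨hlen, hs, _⟩
    have := hs.length_le
    simp [W, hlen] at this
  simp [this]

lemma card_B_zero : (B 0).ncard = 1 := by
  have : B 0 = {([] : List Bool)} := by
    ext l
    constructor
    · rintro ⟨hlen, _⟩
      exact List.length_eq_zero_iff.mp hlen
    · rintro rfl
      refine ⟨rfl, fun h => ?_⟩
      have := h.length_le
      simp [W] at this
  simp [this]

lemma key (n : ℕ) : (A (n + 5)).ncard + (A (n + 1)).ncard = 2 * (A (n + 4)).ncard := by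
  have h1 : (A (n + 5)).ncard = (B (n + 1)).ncard := card_A (n + 1)
  have h2 := card_A n
  have h3 := card_split n
  omega

lemma card_A_four : (A 4).ncard = 1 := by
  have := card_A 0
  rw [card_B_zero] at this
  exact this

end Stmt16

theorem stmt_16 :
    ∀ m : ℕ, 1 ≤ m →
      1 - ∑ n ∈ Finset.Icc 1 m, (firstCount [true, true, true] n : ℝ) * (1 / 2) ^ n
        = (2 * (firstCount [true, true, true] (m + 3) : ℝ)
            - (firstCount [true, true, true] m : ℝ)) / 2 ^ m := by
  have hW : ([true, true, true] : List Bool) = Stmt16.W := rfl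
  have ha : ∀ n, (firstCount [true, true, true] n : ℝ) = ((Stmt16.A n).ncard : ℝ) := by
    intro n; rw [hW, Stmt16.firstCount_eq]
  intro m hm
  induction m, hm using Nat.le_induction with
  | base =>
    simp only [Finset.Icc_self, Finset.sum_singleton, ha]
    rw [Stmt16.card_A_one, show (1 + 3 : ℕ) = 4 from rfl, Stmt16.card_A_four]
    norm_num
  | succ m hm ih =>
    rw [Finset.sum_Icc_succ_top (by omega : 1 ≤ m + 1)]
    have e1 : 1 - ((∑ n ∈ Finset.Icc 1 m, (firstCount [true, true, true] n : ℝ) * (1 / 2) ^ n)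
        + (firstCount [true, true, true] (m + 1) : ℝ) * (1 / 2) ^ (m + 1))
        = (2 * (firstCount [true, true, true] (m + 3) : ℝ)
            - (firstCount [true, true, true] m : ℝ)) / 2 ^ m
          - (firstCount [true, true, true] (m + 1) : ℝ) * (1 / 2) ^ (m + 1) := by
      rw [← ih]; ring
    rw [e1]
    obtain ⟨k, rfl⟩ : ∃ k, m = k + 1 := ⟨m - 1, by omega⟩
    have hkey := Stmt16.key k
    have hkeyR : ((Stmt16.A (k + 5)).ncard : ℝ) + ((Stmt16.A (k + 1)).ncard : ℝ)
        = 2 * ((Stmt16.A (k + 4)).ncard : ℝ) := by exact_mod_cast hkey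
    simp only [ha]
    have e2 : k + 1 + 1 + 3 = k + 5 := by omega
    have e3 : k + 1 + 3 = k + 4 := by omega
    have e4 : k + 1 + 1 = k + 2 := by omega
    rw [e2, e3, e4]
    have h5 : ((Stmt16.A (k + 5)).ncard : ℝ)
        = 2 * ((Stmt16.A (k + 4)).ncard : ℝ) - ((Stmt16.A (k + 1)).ncard : ℝ) := by
      linarith
    rw [h5]
    have h2 : (2 : ℝ) ^ (k + 1) ≠ 0 := by positivity
    have h2' : (2 : ℝ) ^ (k + 2) ≠ 0 := by positivity
    simp only [one_div, inv_pow]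
    field_simp
    ring
end

section
/- Let W = HHT (or equivalently W = HTT). Then for all n ≥ 1, a_W(n) = Round[(1/√5)·φ^{n}] − 1 where φ = (1+√5)/2 (equivalently, a_W(n) = Fib(n) − 1 where Fib is the Fibonacci sequence with Fib(1) = Fib(2) = 1). Moreover, the expected number of flips of a fair coin until W first appears is 8 with variance 24: ∑_{n=1}^∞ n · a_W(n) · (1/2)^n = 8 and ∑_{n=1}^∞ n² · a_W(n) · (1/2)^n − 8² = 24. -/
open List

namespace S17
abbrev HHT : List Bool := [true, true, false]
abbrev HTT : List Bool := [true, false, false]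

def AV (W : List Bool) (m : ℕ) : Set (List Bool) := {l | l.length = m ∧ ¬ W <:+: l}

lemma av_finite (W : List Bool) (m : ℕ) : (AV W m).Finite :=
  (List.finite_length_eq Bool m).subset fun _ hl => hl.1

lemma infix_concat_iff {α : Type*} {u x : List α} {a : α} :
    u <:+: x ++ [a] ↔ u <:+: x ∨ u <:+ x ++ [a] := by
  constructor
  · intro h
    rw [← reverse_infix, reverse_append, reverse_singleton, singleton_append,
      infix_cons_iff] at h
    rcases h with h | h
    · right
      rw [← List.reverse_prefix, reverse_append, reverse_singleton, singleton_append]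
      exact h
    · left; exact reverse_infix.1 h
  · rintro (h | h)
    · exact h.trans (prefix_append x [a]).isInfix
    · exact h.isInfix

lemma hht_cons_false {t : List Bool} : HHT <:+: (false :: t) ↔ HHT <:+: t := by
  rw [infix_cons_iff]
  simp [cons_prefix_cons]

lemma hht_cons_tf {t : List Bool} : HHT <:+: (true :: false :: t) ↔ HHT <:+: t := by
  rw [infix_cons_iff, infix_cons_iff]
  simp [cons_prefix_cons]

lemma not_hht_replicate (k : ℕ) : ¬ HHT <:+: replicate k true := fun h => by
  simpa using List.eq_of_mem_replicate (h.subset (show (false : Bool) ∈ HHT by simp))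

lemma hht_tt {t : List Bool} (h : ¬ HHT <:+: (true :: true :: t)) :
    t = replicate t.length true := by
  induction t with
  | nil => rfl
  | cons a t ih =>
    cases a
    · exact absurd ⟨[], t, rfl⟩ h
    · have h' : ¬ HHT <:+: true :: true :: t :=
        fun hh => h (hh.trans (List.suffix_cons true _).isInfix)
      rw [length_cons, replicate_succ, ← ih h']

lemma av_hht_succ (m : ℕ) :
    AV HHT (m + 2) = (fun t => false :: t) '' AV HHT (m + 1) ∪
      ((fun t => true :: false :: t) '' AV HHT m ∪ {replicate (m + 2) true}) := by
  ext l
  constructor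
  · rintro ⟨hlen, hav⟩
    match l, hlen with
    | a :: b :: t, hlen =>
      have ht : t.length = m := by simpa using hlen
      cases a
      · exact Or.inl ⟨b :: t, ⟨by simpa using hlen, (hht_cons_false).not.mp hav⟩, rfl⟩
      · cases b
        · exact Or.inr (Or.inl ⟨t, ⟨ht, (hht_cons_tf).not.mp hav⟩, rfl⟩)
        · refine Or.inr (Or.inr ?_)
          have := hht_tt hav
          simp only [Set.mem_singleton_iff, replicate_succ]
          rw [← ht, this, length_replicate]
  · rintro (⟨t, ⟨htl, htav⟩, rfl⟩ | ⟨t, ⟨htl, htav⟩, rfl⟩ | h)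
    · exact ⟨by simp [htl], fun hh => htav (hht_cons_false.1 hh)⟩
    · exact ⟨by simp [htl], fun hh => htav (hht_cons_tf.1 hh)⟩
    · rw [Set.mem_singleton_iff.1 h]
      exact ⟨by simp, not_hht_replicate _⟩

noncomputable def b (m : ℕ) : ℕ := (AV HHT m).ncard

lemma b_rec (m : ℕ) : b (m + 2) = b (m + 1) + b m + 1 := by
  have fin1 := (av_finite HHT (m + 1)).image (fun t => false :: t)
  have fin2 := (av_finite HHT m).image (fun t => true :: false :: t)
  have d1 : Disjoint ((fun t => false :: t) '' AV HHT (m + 1))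
      ((fun t => true :: false :: t) '' AV HHT m ∪ {replicate (m + 2) true}) := by
    rw [Set.disjoint_left]
    rintro x ⟨t, _, rfl⟩ (⟨u, _, h⟩ | h)
    · simp at h
    · rw [Set.mem_singleton_iff] at h
      simp [replicate_succ] at h
  have d2 : Disjoint ((fun t => true :: false :: t) '' AV HHT m)
      ({replicate (m + 2) true} : Set (List Bool)) := by
    rw [Set.disjoint_left]
    rintro x ⟨t, _, rfl⟩ h
    rw [Set.mem_singleton_iff] at h
    simp [replicate_succ] at h
  rw [b, av_hht_succ, Set.ncard_union_eq d1 fin1 (fin2.union (Set.finite_singleton _)),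
    Set.ncard_union_eq d2 fin2 (Set.finite_singleton _),
    Set.ncard_image_of_injective _ (fun a b h => by simpa using h),
    Set.ncard_image_of_injective _ (fun a b h => by simpa using h),
    Set.ncard_singleton]
  simp only [b]
  omega

lemma b_zero : b 0 = 1 := by
  have : AV HHT 0 = {([] : List Bool)} := by
    ext l
    constructor
    · rintro ⟨hl, -⟩
      exact length_eq_zero_iff.1 hl
    · rintro rfl
      exact ⟨rfl, by decide⟩
  rw [b, this, Set.ncard_singleton]

lemma b_one : b 1 = 2 := by
  have : AV HHT 1 = {[true], [false]} := by
    ext l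
    match l with
    | [] => simp [AV]
    | [a] =>
      cases a <;> simp [AV] <;> decide
    | a :: b :: t => simp [AV]
  rw [b, this, Set.ncard_pair (by simp)]

lemma b_eq (m : ℕ) : b m = Nat.fib (m + 3) - 1 := by
  induction m using Nat.twoStepInduction with
  | zero => rw [b_zero]; rfl
  | one => rw [b_one]; rfl
  | more m ih1 ih2 =>
    have h1 : 0 < Nat.fib (m + 3) := Nat.fib_pos.2 (by omega)
    have h2 : 0 < Nat.fib (m + 4) := Nat.fib_pos.2 (by omega)
    have h5 : Nat.fib (m + 5) = Nat.fib (m + 3) + Nat.fib (m + 4) := by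
      rw [Nat.fib_add_two]
    rw [b_rec, ih1, ih2, show m + 2 + 3 = m + 5 from rfl, show m + 1 + 3 = m + 4 from rfl]
    omega


end S17

namespace S17
open List

def σ (l : List Bool) : List Bool := (l.map not).reverse

lemma σ_invol : Function.Involutive σ := by
  intro l
  simp [σ, ← List.map_reverse, List.map_map, Function.comp_def]

lemma σ_infix {u x : List Bool} (h : u <:+: x) : σ u <:+: σ x :=
  List.reverse_infix.2 (h.map not)

lemma σ_hht : σ HHT = HTT := by decide

lemma htt_infix_iff {l : List Bool} : HTT <:+: l ↔ HHT <:+: σ l := by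
  constructor
  · intro h
    have := σ_infix h
    rwa [show σ HTT = HHT by decide] at this
  · intro h
    have := σ_infix h
    rwa [σ_hht, σ_invol l] at this

lemma av_htt_eq (m : ℕ) : AV HTT m = σ '' AV HHT m := by
  ext l
  constructor
  · rintro ⟨hl, hav⟩
    exact ⟨σ l, ⟨by simp [σ, hl], fun h => hav (htt_infix_iff.2 h)⟩,
      σ_invol l⟩
  · rintro ⟨t, ⟨htl, htav⟩, rfl⟩
    refine ⟨by simp [σ, htl], fun h => htav ?_⟩
    rwa [htt_infix_iff, σ_invol t] at h

lemma av_htt_ncard (m : ℕ) : (AV HTT m).ncard = b m := by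
  rw [av_htt_eq, Set.ncard_image_of_injective _ σ_invol.injective, b]

lemma firstCount_eq_ncard (W : List Bool) (n : ℕ) :
    firstCount W n = ({l : List Bool | l.length = n ∧ W <:+ l ∧ ¬ W <:+: l.dropLast}).ncard := by
  rw [← Nat.card_coe_set_eq]
  rfl

lemma not_suffix_hht {y s : List Bool} : s ++ HHT ≠ y ++ [true] := by
  intro hs
  apply_fun List.reverse at hs
  simp [List.reverse_append] at hs

lemma fc_set_hht (m : ℕ) :
    {l : List Bool | l.length = m + 3 ∧ HHT <:+ l ∧ ¬ HHT <:+: l.dropLast} =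
      (fun t => t ++ HHT) '' AV HHT m := by
  ext l
  constructor
  · rintro ⟨hlen, ⟨t, rfl⟩, hdl⟩
    refine ⟨t, ⟨by simpa using hlen, fun h => hdl ?_⟩, rfl⟩
    have : (t ++ HHT).dropLast = t ++ [true, true] := by
      rw [show t ++ HHT = (t ++ [true, true]) ++ [false] by simp, dropLast_concat]
    rw [this]
    exact h.trans (prefix_append t [true, true]).isInfix
  · rintro ⟨t, ⟨htl, htav⟩, rfl⟩
    have hdl : (t ++ HHT).dropLast = t ++ [true, true] := by
      rw [show t ++ HHT = (t ++ [true, true]) ++ [false] by simp, dropLast_concat]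
    refine ⟨by simp [htl], suffix_append t HHT, ?_⟩
    rw [hdl]
    intro h
    rw [show t ++ [true, true] = (t ++ [true]) ++ [true] by simp] at h
    rcases infix_concat_iff.1 h with h | ⟨s, hs⟩
    · rcases infix_concat_iff.1 h with h | ⟨s, hs⟩
      · exact htav h
      · exact not_suffix_hht hs
    · exact not_suffix_hht hs

lemma fc_set_htt (m : ℕ) :
    {l : List Bool | l.length = m + 3 ∧ HTT <:+ l ∧ ¬ HTT <:+: l.dropLast} =
      (fun t => t ++ HTT) '' AV HTT m := by
  ext l
  constructor
  · rintro ⟨hlen, ⟨t, rfl⟩, hdl⟩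
    refine ⟨t, ⟨by simpa using hlen, fun h => hdl ?_⟩, rfl⟩
    have : (t ++ HTT).dropLast = t ++ [true, false] := by
      rw [show t ++ HTT = (t ++ [true, false]) ++ [false] by simp, dropLast_concat]
    rw [this]
    exact h.trans (prefix_append t [true, false]).isInfix
  · rintro ⟨t, ⟨htl, htav⟩, rfl⟩
    have hdl : (t ++ HTT).dropLast = t ++ [true, false] := by
      rw [show t ++ HTT = (t ++ [true, false]) ++ [false] by simp, dropLast_concat]
    refine ⟨by simp [htl], suffix_append t HTT, ?_⟩
    rw [hdl]
    intro h
    rw [show t ++ [true, false] = (t ++ [true]) ++ [false] by simp] at h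
    rcases infix_concat_iff.1 h with h | ⟨s, hs⟩
    · rcases infix_concat_iff.1 h with h | ⟨s, hs⟩
      · exact htav h
      · apply_fun List.reverse at hs
        simp [List.reverse_append] at hs
    · apply_fun List.reverse at hs
      simp [List.reverse_append] at hs

lemma fc_small {W : List Bool} (hW : W.length = 3) {n : ℕ} (hn : n < 3) :
    firstCount W n = 0 := by
  rw [firstCount_eq_ncard]
  convert Set.ncard_empty (List Bool)
  ext l
  simp only [Set.mem_setOf_eq, Set.mem_empty_iff_false, iff_false]
  rintro ⟨hlen, hsuf, -⟩
  have := hsuf.length_le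
  omega

lemma fc_main (W : List Bool) (hW : W = HHT ∨ W = HTT) (n : ℕ) (hn : 1 ≤ n) :
    firstCount W n = Nat.fib n - 1 := by
  have hW3 : W.length = 3 := by rcases hW with rfl | rfl <;> rfl
  rcases lt_or_ge n 3 with h3 | h3
  · rw [fc_small hW3 h3]
    interval_cases n <;> simp
  · obtain ⟨m, rfl⟩ : ∃ m, n = m + 3 := ⟨n - 3, by omega⟩
    rcases hW with rfl | rfl
    · rw [firstCount_eq_ncard, fc_set_hht,
        Set.ncard_image_of_injective _ (List.append_left_injective HHT)]
      exact b_eq m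
    · rw [firstCount_eq_ncard, fc_set_htt,
        Set.ncard_image_of_injective _ (List.append_left_injective HTT),
        av_htt_ncard]
      exact b_eq m




lemma tsum_sq_geom {r : ℝ} (hr : |r| < 1) :
    ∑' n : ℕ, (n:ℝ)^2 * r^n = (2*r*(r/(1-r)^2) + r*(1-r)⁻¹) / (1-r) := by
  have hr' : ‖r‖ < 1 := by rwa [Real.norm_eq_abs]
  have hs2 : Summable (fun n : ℕ => (n:ℝ)^2 * r^n) := by
    simpa using summable_pow_mul_geometric_of_norm_lt_one 2 hr'
  have hs1 : Summable (fun n : ℕ => (n:ℝ) * r^n) := by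
    simpa using summable_pow_mul_geometric_of_norm_lt_one 1 hr'
  have hs0 : Summable (fun n : ℕ => r^n) := summable_geometric_of_norm_lt_one hr'
  have key : ∑' n : ℕ, (n:ℝ)^2 * r^n
      = r * ∑' n : ℕ, (n:ℝ)^2 * r^n + 2*r*(∑' n:ℕ, (n:ℝ)*r^n) + r*(∑' n:ℕ, r^n) := by
    conv_lhs => rw [Summable.tsum_eq_zero_add hs2]
    rw [tsum_congr (f := fun n : ℕ => ((n+1:ℕ):ℝ)^2 * r^(n+1))
      (g := fun n : ℕ => r*((n:ℝ)^2*r^n) + 2*r*((n:ℝ)*r^n) + r*(r^n))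
      (by intro n; push_cast; ring)]
    rw [Summable.tsum_add ((hs2.mul_left r).add (hs1.mul_left (2*r))) (hs0.mul_left r),
      Summable.tsum_add (hs2.mul_left r) (hs1.mul_left (2*r)), tsum_mul_left, tsum_mul_left,
      tsum_mul_left]
    push_cast
    ring
  have h1 : (0:ℝ) < 1 - r := by have := (abs_lt.1 hr).2; linarith
  rw [tsum_coe_mul_geometric_of_norm_lt_one hr', tsum_geometric_of_norm_lt_one hr'] at key
  rw [eq_div_iff (ne_of_gt h1)]
  linear_combination key

lemma sqrt5_sq : (Real.sqrt 5)^2 = 5 := Real.sq_sqrt (by norm_num)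
lemma sqrt5_gt : 2 < Real.sqrt 5 := by
  rw [show (2:ℝ) = Real.sqrt 4 by rw [show (4:ℝ) = 2^2 by norm_num, Real.sqrt_sq]; norm_num]
  exact Real.sqrt_lt_sqrt (by norm_num) (by norm_num)
lemma sqrt5_lt : Real.sqrt 5 < 3 := by
  rw [show (3:ℝ) = Real.sqrt 9 by rw [show (9:ℝ) = 3^2 by norm_num, Real.sqrt_sq]; norm_num]
  exact Real.sqrt_lt_sqrt (by norm_num) (by norm_num)

lemma sums_part (fc : ℕ → ℕ) (hfc : ∀ n, 1 ≤ n → fc n = Nat.fib n - 1) :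
    Summable (fun n : ℕ => (n:ℝ) * (fc n : ℝ) * (1/2)^n) ∧
    (∑' n : ℕ, (n:ℝ) * (fc n:ℝ) * (1/2)^n) = 8 ∧
    Summable (fun n : ℕ => (n:ℝ)^2 * (fc n : ℝ) * (1/2)^n) ∧
    (∑' n : ℕ, (n:ℝ)^2 * (fc n:ℝ) * (1/2)^n) - 8^2 = 24 := by
  have hs := sqrt5_sq
  have hg2 := sqrt5_gt
  have hl3 := sqrt5_lt
  have ht0 : Real.sqrt 5 ≠ 0 := by positivity
  have hr1 : |(1 + Real.sqrt 5)/4| < 1 := by rw [abs_lt]; constructor <;> linarith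
  have hr2 : |(1 - Real.sqrt 5)/4| < 1 := by rw [abs_lt]; constructor <;> linarith
  have hrh : |(1/2 : ℝ)| < 1 := by rw [abs_lt]; constructor <;> norm_num
  have hn1 : ‖(1 + Real.sqrt 5)/4‖ < 1 := by rwa [Real.norm_eq_abs]
  have hn2 : ‖(1 - Real.sqrt 5)/4‖ < 1 := by rwa [Real.norm_eq_abs]
  have hnh : ‖(1/2 : ℝ)‖ < 1 := by rwa [Real.norm_eq_abs]
  have hcast : ∀ n : ℕ, 1 ≤ n → (fc n : ℝ) = (Nat.fib n : ℝ) - 1 := by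
    intro n hn
    have hfib : 1 ≤ Nat.fib n := Nat.fib_pos.2 hn
    rw [hfc n hn, Nat.cast_sub hfib, Nat.cast_one]
  have e1 : ∀ n : ℕ, ((1 + Real.sqrt 5)/4)^n = ((1+Real.sqrt 5)/2)^n * (1/2)^n := by
    intro n; rw [← mul_pow]; congr 1; ring
  have e2 : ∀ n : ℕ, ((1 - Real.sqrt 5)/4)^n = ((1-Real.sqrt 5)/2)^n * (1/2)^n := by
    intro n; rw [← mul_pow]; congr 1; ring
  have hfun1 : (fun n : ℕ => (n:ℝ) * (fc n:ℝ) * (1/2)^n)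
      = fun n : ℕ => (1/Real.sqrt 5)*((n:ℝ)*((1 + Real.sqrt 5)/4)^n)
        - (1/Real.sqrt 5)*((n:ℝ)*((1 - Real.sqrt 5)/4)^n) - (n:ℝ)*(1/2)^n := by
    funext n
    rcases Nat.eq_zero_or_pos n with rfl | hn
    · simp
    · rw [hcast n hn, Real.coe_fib_eq]
      simp only [Real.goldenRatio, Real.goldenConj]
      rw [e1, e2]
      ring
  have hfun2 : (fun n : ℕ => (n:ℝ)^2 * (fc n:ℝ) * (1/2)^n)
      = fun n : ℕ => (1/Real.sqrt 5)*((n:ℝ)^2*((1 + Real.sqrt 5)/4)^n)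
        - (1/Real.sqrt 5)*((n:ℝ)^2*((1 - Real.sqrt 5)/4)^n) - (n:ℝ)^2*(1/2)^n := by
    funext n
    rcases Nat.eq_zero_or_pos n with rfl | hn
    · simp
    · rw [hcast n hn, Real.coe_fib_eq]
      simp only [Real.goldenRatio, Real.goldenConj]
      rw [e1, e2]
      ring
  have S11 : Summable (fun n : ℕ => (n:ℝ)*((1 + Real.sqrt 5)/4)^n) := by
    simpa using summable_pow_mul_geometric_of_norm_lt_one 1 hn1
  have S12 : Summable (fun n : ℕ => (n:ℝ)*((1 - Real.sqrt 5)/4)^n) := by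
    simpa using summable_pow_mul_geometric_of_norm_lt_one 1 hn2
  have S1h : Summable (fun n : ℕ => (n:ℝ)*(1/2:ℝ)^n) := by
    simpa using summable_pow_mul_geometric_of_norm_lt_one 1 hnh
  have S21 : Summable (fun n : ℕ => (n:ℝ)^2*((1 + Real.sqrt 5)/4)^n) := by
    simpa using summable_pow_mul_geometric_of_norm_lt_one 2 hn1
  have S22 : Summable (fun n : ℕ => (n:ℝ)^2*((1 - Real.sqrt 5)/4)^n) := by
    simpa using summable_pow_mul_geometric_of_norm_lt_one 2 hn2
  have S2h : Summable (fun n : ℕ => (n:ℝ)^2*(1/2:ℝ)^n) := by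
    simpa using summable_pow_mul_geometric_of_norm_lt_one 2 hnh
  refine ⟨?_, ?_, ?_, ?_⟩
  · rw [hfun1]
    exact ((S11.mul_left _).sub (S12.mul_left _)).sub S1h
  · rw [hfun1, Summable.tsum_sub ((S11.mul_left _).sub (S12.mul_left _)) S1h,
      Summable.tsum_sub (S11.mul_left _) (S12.mul_left _), tsum_mul_left, tsum_mul_left,
      tsum_coe_mul_geometric_of_norm_lt_one hn1,
      tsum_coe_mul_geometric_of_norm_lt_one hn2,
      tsum_coe_mul_geometric_of_norm_lt_one hnh]
    have h3m : (3 - Real.sqrt 5) ≠ 0 := by intro h; linarith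
    have h3p : (3 + Real.sqrt 5) ≠ 0 := by intro h; linarith
    have v1 : ((1 + Real.sqrt 5)/4) / (1 - (1 + Real.sqrt 5)/4)^2 = 11 + 5*Real.sqrt 5 := by
      rw [show (1 - (1 + Real.sqrt 5)/4) = (3 - Real.sqrt 5)/4 by ring]
      field_simp
      linear_combination (19 - 5*Real.sqrt 5) * hs
    have v2 : ((1 - Real.sqrt 5)/4) / (1 - (1 - Real.sqrt 5)/4)^2 = 11 - 5*Real.sqrt 5 := by
      rw [show (1 - (1 - Real.sqrt 5)/4) = (3 + Real.sqrt 5)/4 by ring]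
      field_simp
      linear_combination (19 + 5*Real.sqrt 5) * hs
    rw [v1, v2, show ((1:ℝ)/2) / (1 - 1/2)^2 = 2 by norm_num]
    field_simp
    ring
  · rw [hfun2]
    exact ((S21.mul_left _).sub (S22.mul_left _)).sub S2h
  · rw [hfun2, Summable.tsum_sub ((S21.mul_left _).sub (S22.mul_left _)) S2h,
      Summable.tsum_sub (S21.mul_left _) (S22.mul_left _), tsum_mul_left, tsum_mul_left,
      tsum_sq_geom hr1, tsum_sq_geom hr2, tsum_sq_geom hrh]
    have h3m : (3 - Real.sqrt 5) ≠ 0 := by intro h; linarith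
    have h3p : (3 + Real.sqrt 5) ≠ 0 := by intro h; linarith
    have w1 : (2*((1 + Real.sqrt 5)/4)*(((1 + Real.sqrt 5)/4)/(1 - (1 + Real.sqrt 5)/4)^2)
        + ((1 + Real.sqrt 5)/4)*(1 - (1 + Real.sqrt 5)/4)⁻¹) / (1 - (1 + Real.sqrt 5)/4)
        = 105 + 47*Real.sqrt 5 := by
      rw [show (1 - (1 + Real.sqrt 5)/4) = (3 - Real.sqrt 5)/4 by ring]
      field_simp
      linear_combination (563 - 318*Real.sqrt 5 + 47*Real.sqrt 5^2) * hs
    have w2 : (2*((1 - Real.sqrt 5)/4)*(((1 - Real.sqrt 5)/4)/(1 - (1 - Real.sqrt 5)/4)^2)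
        + ((1 - Real.sqrt 5)/4)*(1 - (1 - Real.sqrt 5)/4)⁻¹) / (1 - (1 - Real.sqrt 5)/4)
        = 105 - 47*Real.sqrt 5 := by
      rw [show (1 - (1 - Real.sqrt 5)/4) = (3 + Real.sqrt 5)/4 by ring]
      field_simp
      linear_combination (563 + 318*Real.sqrt 5 + 47*Real.sqrt 5^2) * hs
    have wh : (2*((1:ℝ)/2)*(((1:ℝ)/2)/(1 - (1:ℝ)/2)^2) + ((1:ℝ)/2)*(1 - (1:ℝ)/2)⁻¹) / (1 - (1:ℝ)/2)
        = 6 := by norm_num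
    rw [w1, w2, wh]
    field_simp
    ring

lemma round_part (n : ℕ) (hn : 1 ≤ n) :
    round ((1 / Real.sqrt 5) * ((1 + Real.sqrt 5) / 2) ^ n) = (Nat.fib n : ℤ) := by
  have hs := sqrt5_sq
  have hg2 := sqrt5_gt
  have hl3 := sqrt5_lt
  have key : (1 / Real.sqrt 5) * ((1 + Real.sqrt 5) / 2) ^ n
      = (Nat.fib n : ℝ) + ((1 - Real.sqrt 5)/2) ^ n / Real.sqrt 5 := by
    rw [Real.coe_fib_eq]
    simp only [Real.goldenRatio, Real.goldenConj]
    ring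
  have habs : |((1 - Real.sqrt 5)/2) ^ n / Real.sqrt 5| < 1/2 := by
    rw [abs_div, abs_pow]
    have h1 : |(1 - Real.sqrt 5)/2| = (Real.sqrt 5 - 1)/2 := by
      rw [abs_of_nonpos (by linarith)]; ring
    have h2 : |Real.sqrt 5| = Real.sqrt 5 := abs_of_pos (by linarith)
    rw [h1, h2]
    have h3 : ((Real.sqrt 5 - 1)/2) ^ n ≤ (Real.sqrt 5 - 1)/2 :=
      pow_le_of_le_one (by linarith) (by linarith) (by omega)
    rw [div_lt_iff₀ (by linarith)]
    calc ((Real.sqrt 5 - 1)/2) ^ n ≤ (Real.sqrt 5 - 1)/2 := h3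
      _ < 1/2 * Real.sqrt 5 := by linarith
  rw [key, round_eq, Int.floor_eq_iff]
  obtain ⟨ha, hb⟩ := abs_lt.1 habs
  constructor
  · push_cast
    linarith
  · push_cast
    linarith

end S17

theorem stmt_17 :
    ∀ W : List Bool, W = [true, true, false] ∨ W = [true, false, false] →
      (∀ n : ℕ, 1 ≤ n →
        (firstCount W n : ℤ)
          = round ((1 / Real.sqrt 5) * ((1 + Real.sqrt 5) / 2) ^ n) - 1 ∧
        firstCount W n = Nat.fib n - 1) ∧
      Summable (fun n : ℕ => (n : ℝ) * (firstCount W n : ℝ) * (1 / 2) ^ n) ∧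
      (∑' n : ℕ, (n : ℝ) * (firstCount W n : ℝ) * (1 / 2) ^ n) = 8 ∧
      Summable (fun n : ℕ => (n : ℝ) ^ 2 * (firstCount W n : ℝ) * (1 / 2) ^ n) ∧
      (∑' n : ℕ, (n : ℝ) ^ 2 * (firstCount W n : ℝ) * (1 / 2) ^ n) - 8 ^ 2 = 24 := by
  intro W hW
  have hfc : ∀ n, 1 ≤ n → firstCount W n = Nat.fib n - 1 :=
    fun n hn => S17.fc_main W hW n hn
  obtain ⟨hsum1, ht1, hsum2, ht2⟩ := S17.sums_part (firstCount W) hfc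
  refine ⟨fun n hn => ⟨?_, hfc n hn⟩, hsum1, ht1, hsum2, ht2⟩
  rw [hfc n hn, S17.round_part n hn]
  have hfib : 1 ≤ Nat.fib n := Nat.fib_pos.2 hn
  rw [Nat.cast_sub hfib, Nat.cast_one]
end
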